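/- arXiv:1906.00103 — 5 statements merged into one kernel-verified Lean document; each statement's English description precedes it below -/
import Mathlib

section
/- The Hankel determinants of the sequence (E_3, E_5, E_7, ...) are H_n = Π_{k=1}^{2n} k!. -/
open Finset

/-- The Euler numbers `E n`, defined as the Taylor coefficients (times `n!`)
of `tan x + sec x` at `0`, i.e. `E n = (d/dx)^n (tan x + sec x) |_{x=0}`. -/
noncomputable def eulerE (n : ℕ) : ℝ :=
  iteratedDeriv n (fun x : ℝ => Real.tan x + (Real.cos x)⁻¹) 0

/-- The word `σ_1 ⋯ σ_n` extended by the boundary convention `σ_0 = σ_{n+1} = +∞`,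
encoded with values in `{0, …, n-1}` and `n` playing the role of `+∞`. -/
def extWord (n : ℕ) (σ : Equiv.Perm (Fin n)) (j : ℕ) : ℕ :=
  if h : 1 ≤ j ∧ j - 1 < n then (σ ⟨j - 1, h.2⟩ : ℕ) else n

/-- number of peaks of `σ` (positions `j ∈ {1,…,n}` with `σ_{j-1} < σ_j > σ_{j+1}`). -/
def pk (n : ℕ) (σ : Equiv.Perm (Fin n)) : ℕ :=
  ((Finset.Icc 1 n).filter (fun j =>
    extWord n σ (j-1) < extWord n σ j ∧ extWord n σ (j+1) < extWord n σ j)).card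

/-- number of valleys of `σ` (positions `j ∈ {1,…,n}` with `σ_{j-1} > σ_j < σ_{j+1}`). -/
def valy (n : ℕ) (σ : Equiv.Perm (Fin n)) : ℕ :=
  ((Finset.Icc 1 n).filter (fun j =>
    extWord n σ j < extWord n σ (j-1) ∧ extWord n σ j < extWord n σ (j+1))).card

/-- number of double ascents of `σ` (positions `j ∈ {1,…,n}` with `σ_{j-1} < σ_j < σ_{j+1}`). -/
def da (n : ℕ) (σ : Equiv.Perm (Fin n)) : ℕ :=
  ((Finset.Icc 1 n).filter (fun j =>
    extWord n σ (j-1) < extWord n σ j ∧ extWord n σ j < extWord n σ (j+1))).card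

/-- number of peaks among positions `j ∈ {2,…,n}`. -/
def pk2 (n : ℕ) (σ : Equiv.Perm (Fin n)) : ℕ :=
  ((Finset.Icc 2 n).filter (fun j =>
    extWord n σ (j-1) < extWord n σ j ∧ extWord n σ (j+1) < extWord n σ j)).card

/-- number of double ascents among positions `j ∈ {2,…,n}`. -/
def da2 (n : ℕ) (σ : Equiv.Perm (Fin n)) : ℕ :=
  ((Finset.Icc 2 n).filter (fun j =>
    extWord n σ (j-1) < extWord n σ j ∧ extWord n σ j < extWord n σ (j+1))).card

/-- number of ascents of `σ` among positions `1,…,n-1` (`σ_j < σ_{j+1}`). -/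
def asc (n : ℕ) (σ : Equiv.Perm (Fin n)) : ℕ :=
  ((Finset.Icc 1 (n-1)).filter (fun j => extWord n σ j < extWord n σ (j+1))).card

/-- number of descents of `σ` among positions `1,…,n-1` (`σ_j > σ_{j+1}`). -/
def des (n : ℕ) (σ : Equiv.Perm (Fin n)) : ℕ :=
  ((Finset.Icc 1 (n-1)).filter (fun j => extWord n σ (j+1) < extWord n σ j)).card


namespace HankelAux

open Finset Real

/-- basis functions `(1-sin θ)^{-k}` -/
noncomputable def V (k : ℕ) : ℝ → ℝ := fun θ => ((1 - Real.sin θ)⁻¹) ^ k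

/-- action of the second derivative on `V`-coordinates -/
noncomputable def Aop (x : ℕ → ℝ) : ℕ → ℝ
  | 0 => 0
  | (j+1) => (j : ℝ) * (2*j+1) * x j - ((j : ℝ)+1)^2 * x (j+1)

noncomputable def e1 : ℕ → ℝ := fun k => if k = 1 then 1 else 0

/-- the moment sequence: `c m = E_{2m+3}` -/
noncomputable def c (m : ℕ) : ℝ := ∑ k ∈ range (m+3), (Aop^[m+1] e1) k

lemma one_sub_sin_ne {θ : ℝ} (h : Real.cos θ ≠ 0) : 1 - Real.sin θ ≠ 0 := by
  intro hs
  have : Real.sin θ = 1 := by linarith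
  have h2 := Real.sin_sq_add_cos_sq θ
  rw [this] at h2
  have : Real.cos θ ^ 2 = 0 := by nlinarith
  exact h (pow_eq_zero_iff (by norm_num)|>.1 this)

lemma one_add_sin_ne {θ : ℝ} (h : Real.cos θ ≠ 0) : 1 + Real.sin θ ≠ 0 := by
  intro hs
  have : Real.sin θ = -1 := by linarith
  have h2 := Real.sin_sq_add_cos_sq θ
  rw [this] at h2
  have : Real.cos θ ^ 2 = 0 := by nlinarith
  exact h (pow_eq_zero_iff (by norm_num)|>.1 this)

lemma V_mul {k : ℕ} {θ : ℝ} (h : Real.cos θ ≠ 0) :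
    (1 - Real.sin θ) * V (k+1) θ = V k θ := by
  have h1 := one_sub_sin_ne h
  simp only [V, pow_succ]
  field_simp

lemma hasDerivV (k : ℕ) {θ : ℝ} (h : Real.cos θ ≠ 0) :
    HasDerivAt (V k) ((k : ℝ) * Real.cos θ * V (k+1) θ) θ := by
  have h1 := one_sub_sin_ne h
  have hs : HasDerivAt (fun θ : ℝ => (1 - Real.sin θ)⁻¹)
      (Real.cos θ / (1 - Real.sin θ)^2) θ := by
    have := ((Real.hasDerivAt_sin θ).const_sub 1).inv h1
    refine this.congr_deriv ?_
    ring
  have := hs.fun_pow k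
  refine this.congr_deriv ?_
  rcases k with _ | k
  · simp [V]
  · simp only [V, Nat.add_sub_cancel]
    rw [div_eq_mul_inv, ← inv_pow]
    push_cast
    ring


/-- first derivative of `V k` as a function -/
noncomputable def W (k : ℕ) : ℝ → ℝ := fun θ => (k : ℝ) * Real.cos θ * V (k+1) θ

lemma cos_sq_V {k : ℕ} {θ : ℝ} (h : Real.cos θ ≠ 0) :
    Real.cos θ ^ 2 * V (k+2) θ = (1 + Real.sin θ) * V (k+1) θ := by
  have h2 : Real.cos θ ^ 2 = (1 + Real.sin θ) * (1 - Real.sin θ) := by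
    have := Real.sin_sq_add_cos_sq θ; nlinarith
  rw [h2, mul_assoc, V_mul h]

lemma sin_V {k : ℕ} {θ : ℝ} (h : Real.cos θ ≠ 0) :
    Real.sin θ * V (k+1) θ = V (k+1) θ - V k θ := by
  have := V_mul (k := k) h
  linarith [this]

lemma hasDerivW (k : ℕ) {θ : ℝ} (h : Real.cos θ ≠ 0) :
    HasDerivAt (W k) ((k : ℝ) * (2*k+1) * V (k+1) θ - (k : ℝ)^2 * V k θ) θ := by
  have h1 : HasDerivAt (fun θ => Real.cos θ * V (k+1) θ)
      (-Real.sin θ * V (k+1) θ + Real.cos θ * (((k:ℝ)+1) * Real.cos θ * V (k+2) θ)) θ := by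
    have := (Real.hasDerivAt_cos θ).fun_mul (hasDerivV (k+1) h)
    refine this.congr_deriv ?_
    push_cast; ring
  have hW : W k = fun y => (k:ℝ) * (Real.cos y * V (k+1) y) := by
    funext y; simp [W, mul_assoc]
  rw [hW]
  have h2 := h1.const_mul (k : ℝ)
  refine h2.congr_deriv ?_
  have e1 : Real.cos θ * (((k:ℝ)+1) * Real.cos θ * V (k+2) θ)
      = ((k:ℝ)+1) * ((1 + Real.sin θ) * V (k+1) θ) := by
    rw [← cos_sq_V (k := k) h]; ring
  rw [e1]
  have e2 := sin_V (k := k) h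
  nlinarith [e2]


/-- `Fc N x = Σ_{k<N} x k • V k` -/
noncomputable def Fc (N : ℕ) (x : ℕ → ℝ) : ℝ → ℝ := fun θ => ∑ k ∈ range N, x k * V k θ

lemma isOpen_cos : IsOpen {θ : ℝ | Real.cos θ ≠ 0} :=
  isOpen_ne.preimage Real.continuous_cos

lemma hasDerivFc (N : ℕ) (x : ℕ → ℝ) {θ : ℝ} (h : Real.cos θ ≠ 0) :
    HasDerivAt (Fc N x) (∑ k ∈ range N, x k * W k θ) θ := by
  have : HasDerivAt (fun θ => ∑ k ∈ range N, x k * V k θ)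
      (∑ k ∈ range N, x k * W k θ) θ := by
    apply HasDerivAt.fun_sum
    intro k _
    exact (hasDerivV k h).const_mul (x k)
  exact this

lemma deriv_Fc (N : ℕ) (x : ℕ → ℝ) {θ : ℝ} (h : Real.cos θ ≠ 0) :
    deriv (Fc N x) θ = ∑ k ∈ range N, x k * W k θ := (hasDerivFc N x h).deriv

/-- the key second-derivative computation -/
lemma deriv2_Fc (N : ℕ) (x : ℕ → ℝ) (hx : ∀ k, N ≤ k → x k = 0) {θ : ℝ}
    (h : Real.cos θ ≠ 0) :
    deriv (deriv (Fc N x)) θ = Fc (N+1) (Aop x) θ := by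
  have hmem : {θ : ℝ | Real.cos θ ≠ 0} ∈ nhds θ := isOpen_cos.mem_nhds h
  have hev : deriv (Fc N x) =ᶠ[nhds θ] (fun θ => ∑ k ∈ range N, x k * W k θ) :=
    Filter.eventually_of_mem hmem (fun t ht => deriv_Fc N x ht)
  rw [hev.deriv_eq]
  have hN : HasDerivAt (fun θ => ∑ k ∈ range N, x k * W k θ)
      (∑ k ∈ range N, x k * ((k : ℝ) * (2*k+1) * V (k+1) θ - (k : ℝ)^2 * V k θ)) θ := by
    apply HasDerivAt.fun_sum
    intro k _
    exact (hasDerivW k h).const_mul (x k)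
  rw [hN.deriv]
  -- now a finite sum identity
  unfold Fc
  rw [Finset.sum_range_succ' (fun k => Aop x k * V k θ) N]
  have h0 : Aop x 0 * V 0 θ = 0 := by simp [Aop]
  rw [h0, add_zero]
  have hstep : ∀ j ∈ range N, Aop x (j+1) * V (j+1) θ
      = x j * ((j : ℝ) * (2*j+1) * V (j+1) θ) - ((j:ℝ)+1)^2 * x (j+1) * V (j+1) θ := by
    intro j _; simp only [Aop]; ring
  rw [Finset.sum_congr rfl hstep, Finset.sum_sub_distrib]
  have e2 : ∑ j ∈ range N, ((j:ℝ)+1)^2 * x (j+1) * V (j+1) θ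
      = ∑ k ∈ range N, x k * ((k:ℝ)^2 * V k θ) := by
    set g : ℕ → ℝ := fun k => x k * ((k:ℝ)^2 * V k θ) with hg
    have c1 : ∑ j ∈ range N, ((j:ℝ)+1)^2 * x (j+1) * V (j+1) θ = ∑ j ∈ range N, g (j+1) := by
      apply Finset.sum_congr rfl
      intro j _; simp only [hg]; push_cast; ring
    have c2 : ∑ j ∈ range (N+1), g j = ∑ j ∈ range N, g (j+1) + g 0 :=
      Finset.sum_range_succ' g N
    have c3 : ∑ j ∈ range (N+1), g j = ∑ j ∈ range N, g j + g N :=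
      Finset.sum_range_succ g N
    have hg0 : g 0 = 0 := by simp [hg]
    have hgN : g N = 0 := by simp [hg, hx N le_rfl]
    rw [c1]
    have := c2.symm.trans c3
    rw [hg0, add_zero] at this
    rw [hgN, add_zero] at this
    rw [this]
  rw [e2, ← Finset.sum_sub_distrib]
  apply Finset.sum_congr rfl
  intro k _
  ring

lemma Aop_supp {N : ℕ} {x : ℕ → ℝ} (hx : ∀ k, N ≤ k → x k = 0) :
    ∀ k, N + 1 ≤ k → Aop x k = 0 := by
  intro k hk
  match k, hk with
  | (j+1), hk =>
    have h1 : x j = 0 := hx j (by omega)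
    have h2 : x (j+1) = 0 := hx (j+1) (by omega)
    simp [Aop, h1, h2]

lemma Aop_iter_supp {N : ℕ} {x : ℕ → ℝ} (hx : ∀ k, N ≤ k → x k = 0) (m : ℕ) :
    ∀ k, N + m ≤ k → Aop^[m] x k = 0 := by
  induction m with
  | zero => simpa using hx
  | succ m ih =>
    rw [Function.iterate_succ_apply']
    intro k hk
    exact Aop_supp ih k (by omega)

/-- iterated even derivatives of `Fc` -/
lemma iter_deriv_Fc (m : ℕ) (x : ℕ → ℝ) (N : ℕ) (hx : ∀ k, N ≤ k → x k = 0) :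
    ∀ θ, Real.cos θ ≠ 0 → iteratedDeriv (2*m) (Fc N x) θ = Fc (N+m) (Aop^[m] x) θ := by
  induction m with
  | zero => intro θ _; simp [Fc]
  | succ m ih =>
    intro θ hθ
    have h2 : 2*(m+1) = (2*m+1)+1 := by ring
    rw [h2, iteratedDeriv_succ, iteratedDeriv_succ]
    have hmem : {θ : ℝ | Real.cos θ ≠ 0} ∈ nhds θ := isOpen_cos.mem_nhds hθ
    have hev1 : iteratedDeriv (2*m) (Fc N x) =ᶠ[nhds θ] Fc (N+m) (Aop^[m] x) := by
      filter_upwards [hmem] with t ht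
      exact ih t ht
    have hev2 : deriv (iteratedDeriv (2*m) (Fc N x)) =ᶠ[nhds θ] deriv (Fc (N+m) (Aop^[m] x)) := by
      filter_upwards [isOpen_cos.eventually_mem hθ] with t ht
      have : iteratedDeriv (2*m) (Fc N x) =ᶠ[nhds t] Fc (N+m) (Aop^[m] x) := by
        filter_upwards [isOpen_cos.mem_nhds ht] with u hu
        exact ih u hu
      exact this.deriv_eq
    rw [hev2.deriv_eq]
    have := deriv2_Fc (N+m) (Aop^[m] x) (Aop_iter_supp hx m) hθ
    rw [this, Function.iterate_succ_apply']
    norm_num [Nat.add_assoc]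


/-- the derivative of tan+sec is `V 1` where cos ≠ 0 -/
lemma deriv_tansec {θ : ℝ} (h : Real.cos θ ≠ 0) :
    deriv (fun x : ℝ => Real.tan x + (Real.cos x)⁻¹) θ = V 1 θ := by
  have ht : HasDerivAt Real.tan (1 / Real.cos θ ^ 2) θ := Real.hasDerivAt_tan h
  have hc : HasDerivAt (fun x : ℝ => (Real.cos x)⁻¹)
      (Real.sin θ / Real.cos θ ^ 2) θ := by
    have := (Real.hasDerivAt_cos θ).inv h
    refine this.congr_deriv ?_
    ring
  have := (ht.fun_add hc).deriv
  rw [this]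
  have hcs : Real.cos θ ^ 2 = (1 + Real.sin θ) * (1 - Real.sin θ) := by
    have := Real.sin_sq_add_cos_sq θ; nlinarith
  have h1 := one_sub_sin_ne h
  have h2 := one_add_sin_ne h
  simp only [V, pow_one]
  rw [hcs]
  field_simp

/-- congruence of iterated derivatives for functions agreeing on an open set -/
lemma iteratedDeriv_congr_open {S : Set ℝ} (hS : IsOpen S) {f g : ℝ → ℝ}
    (hfg : ∀ θ ∈ S, f θ = g θ) (n : ℕ) :
    ∀ θ ∈ S, iteratedDeriv n f θ = iteratedDeriv n g θ := by
  induction n with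
  | zero => simpa using hfg
  | succ n ih =>
    intro θ hθ
    rw [iteratedDeriv_succ, iteratedDeriv_succ]
    have hev : iteratedDeriv n f =ᶠ[nhds θ] iteratedDeriv n g := by
      filter_upwards [hS.mem_nhds hθ] with t ht
      exact ih t ht
    exact hev.deriv_eq

lemma eulerE_eq_c (m : ℕ) : eulerE (2*m+3) = c m := by
  have h0 : Real.cos (0:ℝ) ≠ 0 := by simp
  have hS : IsOpen {θ : ℝ | Real.cos θ ≠ 0} := isOpen_cos
  unfold eulerE
  have e3 : 2*m+3 = (2*(m+1)) + 1 := by ring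
  rw [e3, iteratedDeriv_succ']
  have hcong := iteratedDeriv_congr_open hS
      (f := deriv (fun x : ℝ => Real.tan x + (Real.cos x)⁻¹)) (g := Fc 2 e1)
      (fun θ hθ => by
        rw [deriv_tansec hθ]
        simp [Fc, e1, Finset.sum_range_succ])
      (2*(m+1)) 0 h0
  rw [hcong]
  have hsupp : ∀ k, 2 ≤ k → e1 k = 0 := by
    intro k hk; simp only [e1]; rw [if_neg (by omega)]
  rw [iter_deriv_Fc (m+1) e1 2 hsupp 0 h0]
  unfold Fc c
  have hr : 2 + (m+1) = m + 3 := by omega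
  rw [hr]
  apply Finset.sum_congr rfl
  intro k _
  simp [V]


/-- rising factorial `k(k+1)⋯(k+r-1)` -/
noncomputable def rise (k r : ℕ) : ℝ := ∏ l ∈ range r, ((k:ℝ) + l)

/-- `Λ_r` functional -/
noncomputable def Lam (r N : ℕ) (x : ℕ → ℝ) : ℝ := ∑ k ∈ range N, x k * rise k r

lemma rise_succ (k r : ℕ) : rise k (r+1) = rise k r * ((k:ℝ) + r) := Finset.prod_range_succ _ _

lemma rise_shift (j r : ℕ) : (j:ℝ) * rise (j+1) r = rise j r * ((j:ℝ) + r) := by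
  have h1 : (j:ℝ) * rise (j+1) r = ∏ l ∈ range (r+1), ((j:ℝ) + l) := by
    rw [Finset.prod_range_succ' (fun l => (j:ℝ) + l) r]
    simp only [Nat.cast_zero, add_zero, rise]
    rw [mul_comm]
    congr 1
    apply Finset.prod_congr rfl
    intro l _; push_cast; ring
  rw [h1, Finset.prod_range_succ]
  rfl

lemma rise_id (j r : ℕ) :
    (j:ℝ) * (2*j+1) * rise (j+1) r - (j:ℝ)^2 * rise j r
      = rise j (r+2) - (r:ℝ)^2 * rise j r := by
  have h1 : (j:ℝ) * (2*j+1) * rise (j+1) r = (2*(j:ℝ)+1) * (rise j r * ((j:ℝ)+r)) := by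
    rw [← rise_shift]; ring
  rw [h1, rise_succ, rise_succ]
  push_cast
  ring

/-- `Λ_r (A x) = Λ_{r+2} x - r² Λ_r x` -/
lemma LamA (r N : ℕ) (x : ℕ → ℝ) (hx : ∀ k, N ≤ k → x k = 0) :
    Lam r (N+1) (Aop x) = Lam (r+2) N x - (r:ℝ)^2 * Lam r N x := by
  unfold Lam
  rw [Finset.sum_range_succ' (fun k => Aop x k * rise k r) N]
  have h0 : Aop x 0 * rise 0 r = 0 := by simp [Aop]
  rw [h0, add_zero]
  have hstep : ∀ j ∈ range N, Aop x (j+1) * rise (j+1) r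
      = x j * ((j:ℝ) * (2*j+1) * rise (j+1) r) - ((j:ℝ)+1)^2 * x (j+1) * rise (j+1) r := by
    intro j _; simp only [Aop]; ring
  rw [Finset.sum_congr rfl hstep, Finset.sum_sub_distrib]
  set g : ℕ → ℝ := fun k => x k * ((k:ℝ)^2 * rise k r) with hg
  have c1 : ∑ j ∈ range N, ((j:ℝ)+1)^2 * x (j+1) * rise (j+1) r = ∑ j ∈ range N, g (j+1) := by
    apply Finset.sum_congr rfl
    intro j _; simp only [hg]; push_cast; ring
  have c2 : ∑ j ∈ range (N+1), g j = ∑ j ∈ range N, g (j+1) + g 0 := Finset.sum_range_succ' g N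
  have c3 : ∑ j ∈ range (N+1), g j = ∑ j ∈ range N, g j + g N := Finset.sum_range_succ g N
  have hg0 : g 0 = 0 := by simp [hg]
  have hgN : g N = 0 := by simp [hg, hx N le_rfl]
  rw [c1]
  have hc : ∑ j ∈ range N, g (j+1) = ∑ j ∈ range N, g j := by
    have := c2.symm.trans c3
    rw [hg0, add_zero, hgN, add_zero] at this
    exact this
  rw [hc, ← Finset.sum_sub_distrib]
  have hterm : ∀ k ∈ range N, x k * ((k:ℝ)*(2*k+1) * rise (k+1) r) - g k
      = x k * rise k (r+2) - (r:ℝ)^2 * (x k * rise k r) := by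
    intro k _
    simp only [hg]
    linear_combination x k * rise_id k r
  rw [Finset.sum_congr rfl hterm, Finset.sum_sub_distrib, ← Finset.mul_sum]

/-- the central factorial-like transition array -/
noncomputable def Tarr : ℕ → ℕ → ℝ
  | 0, 0 => 1
  | 0, _+1 => 0
  | _+1, 0 => 0
  | m+1, i+1 => Tarr m i - 4*((i:ℝ)+1)^2 * Tarr m (i+1)

lemma Tarr_zero_of_gt : ∀ m i, m < i → Tarr m i = 0 := by
  intro m
  induction m with
  | zero => intro i hi; match i, hi with | (i+1), _ => rfl
  | succ m ih =>
    intro i hi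
    match i, hi with
    | (i+1), hi =>
      show Tarr m i - 4*((i:ℝ)+1)^2 * Tarr m (i+1) = 0
      rw [ih i (by omega), ih (i+1) (by omega)]
      ring

/-- summation by parts for the `Tarr` recurrence -/
lemma Tstep (m : ℕ) (f : ℕ → ℝ) :
    ∑ i ∈ range (m+2), Tarr (m+1) i * f i
      = ∑ i ∈ range (m+1), Tarr m i * (f (i+1) - 4*(i:ℝ)^2 * f i) := by
  rw [Finset.sum_range_succ' (fun i => Tarr (m+1) i * f i) (m+1)]
  have h0 : Tarr (m+1) 0 * f 0 = 0 := by
    show (0:ℝ) * f 0 = 0; ring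
  rw [h0, add_zero]
  have hstep : ∀ i ∈ range (m+1), Tarr (m+1) (i+1) * f (i+1)
      = Tarr m i * f (i+1) - 4*((i:ℝ)+1)^2 * Tarr m (i+1) * f (i+1) := by
    intro i _
    show (Tarr m i - 4*((i:ℝ)+1)^2 * Tarr m (i+1)) * f (i+1) = _
    ring
  rw [Finset.sum_congr rfl hstep, Finset.sum_sub_distrib]
  set g : ℕ → ℝ := fun i => 4*(i:ℝ)^2 * Tarr m i * f i with hg
  have c1 : ∑ i ∈ range (m+1), 4*((i:ℝ)+1)^2 * Tarr m (i+1) * f (i+1) = ∑ i ∈ range (m+1), g (i+1) := by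
    apply Finset.sum_congr rfl
    intro i _; simp only [hg]; push_cast; ring
  have c2 : ∑ i ∈ range (m+2), g i = ∑ i ∈ range (m+1), g (i+1) + g 0 := Finset.sum_range_succ' g (m+1)
  have c3 : ∑ i ∈ range (m+2), g i = ∑ i ∈ range (m+1), g i + g (m+1) := Finset.sum_range_succ g (m+1)
  have hg0 : g 0 = 0 := by simp [hg]
  have hgN : g (m+1) = 0 := by
    simp only [hg]
    rw [Tarr_zero_of_gt m (m+1) (by omega)]
    ring
  have hc : ∑ i ∈ range (m+1), g (i+1) = ∑ i ∈ range (m+1), g i := by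
    have := c2.symm.trans c3
    rw [hg0, add_zero, hgN, add_zero] at this
    exact this
  rw [c1, hc, ← Finset.sum_sub_distrib]
  apply Finset.sum_congr rfl
  intro i _
  simp only [hg]
  ring

/-- main expansion of `Λ_0 ∘ A^m` over `Λ_{2i}` -/
lemma EXP : ∀ (m : ℕ) (x : ℕ → ℝ) (N : ℕ), (∀ k, N ≤ k → x k = 0) →
    Lam 0 (N+m) (Aop^[m] x) = ∑ i ∈ range (m+1), Tarr m i * Lam (2*i) N x := by
  intro m
  induction m with
  | zero =>
    intro x N hx
    simp [Tarr]
  | succ m ih =>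
    intro x N hx
    rw [Function.iterate_succ_apply]
    have hN : N + (m+1) = (N+1) + m := by omega
    rw [hN, ih (Aop x) (N+1) (Aop_supp hx)]
    rw [Tstep m (fun i => Lam (2*i) N x)]
    apply Finset.sum_congr rfl
    intro i _
    rw [LamA (2*i) N x hx]
    have : 2*(i+1) = 2*i+2 := by ring
    rw [this]
    push_cast
    ring

lemma rise_one (r : ℕ) : rise 1 r = Nat.factorial r := by
  induction r with
  | zero => simp [rise]
  | succ r ih =>
    rw [rise_succ, ih, Nat.factorial_succ]
    push_cast
    ring

lemma rise_two (r : ℕ) : rise 2 r = Nat.factorial (r+1) := by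
  induction r with
  | zero => simp [rise]
  | succ r ih =>
    rw [rise_succ, ih, Nat.factorial_succ (r+1)]
    push_cast
    ring

/-- the moments expanded over the transition array -/
lemma c_expand (m : ℕ) :
    c m = ∑ i ∈ range (m+1), Tarr m i * ((6*(i:ℝ)+2) * Nat.factorial (2*i)) := by
  have hsupp : ∀ k, 3 ≤ k → Aop e1 k = 0 := by
    have h2 : ∀ k, 2 ≤ k → e1 k = 0 := by
      intro k hk; simp only [e1]; rw [if_neg (by omega)]
    exact fun k hk => Aop_supp h2 k hk
  have h1 : c m = Lam 0 (3+m) (Aop^[m] (Aop e1)) := by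
    unfold c Lam
    have : m + 3 = 3 + m := by omega
    rw [this, ← Function.iterate_succ_apply]
    apply Finset.sum_congr rfl
    intro k _
    simp [rise]
  rw [h1, EXP m (Aop e1) 3 hsupp]
  apply Finset.sum_congr rfl
  intro i _
  congr 1
  -- Λ_{2i} (A e1) = (6i+2)(2i)!
  unfold Lam
  rw [Finset.sum_range_succ, Finset.sum_range_succ, Finset.sum_range_succ, Finset.sum_range_zero]
  have ha0 : Aop e1 0 = 0 := rfl
  have ha1 : Aop e1 1 = -1 := by
    norm_num [Aop, e1]
  have ha2 : Aop e1 2 = 3 := by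
    norm_num [Aop, e1]
  rw [ha0, ha1, ha2, rise_one, rise_two]
  have : (2*i+1) = (2*i) + 1 := rfl
  rw [this, Nat.factorial_succ]
  push_cast
  ring


/-- falling-factorial product `i(i-1)⋯(i-k+1)` -/
noncomputable def Qf (k i : ℕ) : ℝ := ∏ j ∈ range k, ((i:ℝ) - j)

/-- the (scaled) bridging kernel -/
noncomputable def Yt (k i : ℕ) : ℝ :=
  Nat.factorial (2*i) * Qf k i * ((2*(k:ℝ)+3)*(i:ℝ)+1)

lemma Qf_succ (k i : ℕ) : Qf (k+1) i = Qf k i * ((i:ℝ) - k) := Finset.prod_range_succ _ _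

lemma Qf_shift (k i : ℕ) : Qf (k+1) (i+1) = ((i:ℝ)+1) * Qf k i := by
  unfold Qf
  push_cast
  rw [Finset.prod_range_succ' (fun j : ℕ => (i:ℝ) + 1 - (j:ℝ)) k]
  rw [mul_comm]
  simp only [Nat.cast_zero, sub_zero]
  congr 1
  apply Finset.prod_congr rfl
  intro j _
  push_cast
  ring

lemma Yt_at_zero (k : ℕ) : Yt (k+1) 0 = 0 := by
  unfold Yt
  have : Qf (k+1) 0 = 0 := by
    apply Finset.prod_eq_zero (Finset.mem_range.2 (Nat.succ_pos k))
    simp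
  rw [this]
  ring

lemma Yt_zero_zero : Yt 0 0 = 1 := by
  unfold Yt Qf
  simp

lemma Yt_row0 (i : ℕ) : Yt 0 i = (3*(i:ℝ)+1) * Nat.factorial (2*i) := by
  unfold Yt Qf
  simp
  ring

lemma fact2i (i : ℕ) : (Nat.factorial (2*(i+1)) : ℝ)
    = (2*(i:ℝ)+2) * (2*(i:ℝ)+1) * Nat.factorial (2*i) := by
  have h : 2*(i+1) = (2*i+1)+1 := by ring
  rw [h, Nat.factorial_succ, Nat.factorial_succ]
  push_cast
  ring

/-- key recurrence, boundary case `k = 0` -/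
lemma Ytrec0 (i : ℕ) : Yt 0 (i+1) = (4*(i:ℝ)^2 + 8) * Yt 0 i + 6 * Yt 1 i := by
  unfold Yt
  have hq0 : Qf 0 i = 1 := by simp [Qf]
  have hq01 : Qf 0 (i+1) = 1 := by simp [Qf]
  have hq1 : Qf 1 i = (i:ℝ) := by simp [Qf]
  rw [hq0, hq01, hq1, fact2i]
  push_cast
  ring

/-- key recurrence, general case -/
lemma YtrecS (k i : ℕ) : Yt (k+1) (i+1)
    = (2*(k:ℝ)+2)*(2*(k:ℝ)+3)*((k:ℝ)+2) * Yt k i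
      + (4*(i:ℝ)^2 + 8*((k:ℝ)+2)^2) * Yt (k+1) i
      + 2*(2*(k:ℝ)+5) * Yt (k+2) i := by
  unfold Yt
  rw [Qf_shift, Qf_succ (k+1) i, Qf_succ k i, fact2i]
  push_cast
  ring


/-- the (scaled) Aigner array -/
noncomputable def aA (m k : ℕ) : ℝ := ∑ i ∈ range (m+1), Tarr m i * Yt k i

lemma aA_zero (k : ℕ) : aA 0 k = Yt k 0 := by
  unfold aA
  rw [Finset.sum_range_one]
  show Tarr 0 0 * Yt k 0 = Yt k 0
  rw [show Tarr 0 0 = 1 from rfl]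
  ring

lemma c_eq_aA (m : ℕ) : c m = 2 * aA m 0 := by
  rw [c_expand]
  unfold aA
  rw [Finset.mul_sum]
  apply Finset.sum_congr rfl
  intro i _
  rw [Yt_row0]
  ring

/-- recurrence of `aA` in `m`, boundary case -/
lemma aA_rec0 (m : ℕ) : aA (m+1) 0 = 8 * aA m 0 + 6 * aA m 1 := by
  unfold aA
  rw [Tstep m (fun i => Yt 0 i), Finset.mul_sum, Finset.mul_sum, ← Finset.sum_add_distrib]
  apply Finset.sum_congr rfl
  intro i _
  rw [Ytrec0 i]
  ring

/-- recurrence of `aA` in `m`, general case -/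
lemma aA_recS (m k : ℕ) : aA (m+1) (k+1)
    = (2*(k:ℝ)+2)*(2*(k:ℝ)+3)*((k:ℝ)+2) * aA m k
      + 8*((k:ℝ)+2)^2 * aA m (k+1)
      + 2*(2*(k:ℝ)+5) * aA m (k+2) := by
  unfold aA
  rw [Tstep m (fun i => Yt (k+1) i), Finset.mul_sum, Finset.mul_sum, Finset.mul_sum,
    ← Finset.sum_add_distrib, ← Finset.sum_add_distrib]
  apply Finset.sum_congr rfl
  intro i _
  rw [YtrecS k i]
  ring

/-- triangularity and diagonal values -/
lemma aA_tri : ∀ m k, m < k → aA m k = 0 := by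
  intro m
  induction m with
  | zero =>
    intro k hk
    rw [aA_zero]
    match k, hk with
    | (k+1), _ => exact Yt_at_zero k
  | succ m ih =>
    intro k hk
    match k, hk with
    | (k+1), hk =>
      rw [aA_recS]
      rw [ih k (by omega), ih (k+1) (by omega), ih (k+2) (by omega)]
      ring

lemma aA_diag : ∀ m, aA m m = Nat.factorial (2*m+1) * Nat.factorial (m+1) := by
  intro m
  induction m with
  | zero => rw [aA_zero, Yt_zero_zero]; norm_num
  | succ m ih =>
    rw [aA_recS, ih, aA_tri m (m+1) (by omega), aA_tri m (m+2) (by omega)]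
    have h1 : 2*(m+1)+1 = (2*m+2)+1 := by ring
    rw [h1, Nat.factorial_succ (2*m+2), Nat.factorial_succ (2*m+1), Nat.factorial_succ (m+1)]
    push_cast
    ring


/-- Hankel weights -/
noncomputable def mu (k : ℕ) : ℝ :=
  (2*(k:ℝ)+2) / (Nat.factorial (k+1) * Nat.factorial (k+1))

lemma fact_ne (n : ℕ) : (Nat.factorial n : ℝ) ≠ 0 := by
  exact_mod_cast Nat.factorial_ne_zero n

lemma mu_zero : mu 0 = 2 := by norm_num [mu, Nat.factorial]

lemma murel (k : ℕ) :
    (2*(k:ℝ)+2)*(2*(k:ℝ)+3)*((k:ℝ)+2) * mu (k+1) = 2*(2*(k:ℝ)+3) * mu k := by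
  unfold mu
  rw [Nat.factorial_succ (k+1)]
  have h := fact_ne (k+1)
  push_cast
  field_simp
  ring

noncomputable def Bf (K i j : ℕ) : ℝ := ∑ k ∈ range K, aA i k * aA j k * mu k

noncomputable def Ef (K i j : ℕ) : ℝ := ∑ k ∈ range K,
  (2*(2*(k:ℝ)+3) * mu k * aA i k * aA j (k+1)
    + 8*((k:ℝ)+1)^2 * mu k * aA i k * aA j k
    + 2*(2*(k:ℝ)+3) * mu k * aA i (k+1) * aA j k)

lemma Ef_symm (K i j : ℕ) : Ef K i j = Ef K j i := by
  unfold Ef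
  apply Finset.sum_congr rfl
  intro k _
  ring

lemma Bf_symm (K i j : ℕ) : Bf K i j = Bf K j i := by
  unfold Bf
  apply Finset.sum_congr rfl
  intro k _
  ring

lemma Bstep (K i j : ℕ) (hj : j + 2 ≤ K) : Bf K (i+1) j = Ef K i j := by
  obtain ⟨K', rfl⟩ : ∃ K', K = K' + 1 := ⟨K - 1, by omega⟩
  unfold Bf Ef
  rw [Finset.sum_range_succ' (fun k => aA (i+1) k * aA j k * mu k) K']
  -- boundary term
  have hb : aA (i+1) 0 * aA j 0 * mu 0 = (8 * aA i 0 + 6 * aA i 1) * aA j 0 * mu 0 := by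
    rw [aA_rec0]
  rw [hb]
  have hstep : ∀ k ∈ range K', aA (i+1) (k+1) * aA j (k+1) * mu (k+1)
      = ((2*(k:ℝ)+2)*(2*(k:ℝ)+3)*((k:ℝ)+2) * aA i k) * aA j (k+1) * mu (k+1)
        + (8*((k:ℝ)+2)^2 * aA i (k+1)) * aA j (k+1) * mu (k+1)
        + (2*(2*(k:ℝ)+5) * aA i (k+2)) * aA j (k+1) * mu (k+1) := by
    intro k _
    rw [aA_recS]
    ring
  rw [Finset.sum_congr rfl hstep]
  rw [Finset.sum_add_distrib, Finset.sum_add_distrib]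
  -- class 1 : use murel and add missing top term
  have hc1 : ∑ k ∈ range K', ((2*(k:ℝ)+2)*(2*(k:ℝ)+3)*((k:ℝ)+2) * aA i k) * aA j (k+1) * mu (k+1)
      = ∑ k ∈ range (K'+1), 2*(2*(k:ℝ)+3) * mu k * aA i k * aA j (k+1) := by
    rw [Finset.sum_range_succ]
    have htop : 2*(2*(K':ℝ)+3) * mu K' * aA i K' * aA j (K'+1) = 0 := by
      rw [aA_tri j (K'+1) (by omega)]
      ring
    rw [htop, add_zero]
    apply Finset.sum_congr rfl
    intro k _
    linear_combination aA i k * aA j (k+1) * murel k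
  -- class 2 : shift index
  have hc2 : ∑ k ∈ range K', (8*((k:ℝ)+2)^2 * aA i (k+1)) * aA j (k+1) * mu (k+1)
        + (8 * aA i 0) * aA j 0 * mu 0
      = ∑ k ∈ range (K'+1), 8*((k:ℝ)+1)^2 * mu k * aA i k * aA j k := by
    rw [Finset.sum_range_succ' (fun k => 8*((k:ℝ)+1)^2 * mu k * aA i k * aA j k) K']
    congr 1
    · apply Finset.sum_congr rfl
      intro k _
      push_cast
      ring
    · push_cast
      ring
  -- class 3 : shift index
  have hc3 : ∑ k ∈ range K', (2*(2*(k:ℝ)+5) * aA i (k+2)) * aA j (k+1) * mu (k+1)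
        + (6 * aA i 1) * aA j 0 * mu 0
      = ∑ k ∈ range (K'+1), 2*(2*(k:ℝ)+3) * mu k * aA i (k+1) * aA j k := by
    rw [Finset.sum_range_succ' (fun k => 2*(2*(k:ℝ)+3) * mu k * aA i (k+1) * aA j k) K']
    congr 1
    · apply Finset.sum_congr rfl
      intro k _
      push_cast
      ring
    · push_cast
      ring
  have hsplit : (∑ k ∈ range (K'+1),
      (2*(2*(k:ℝ)+3) * mu k * aA i k * aA j (k+1)
        + 8*((k:ℝ)+1)^2 * mu k * aA i k * aA j k
        + 2*(2*(k:ℝ)+3) * mu k * aA i (k+1) * aA j k))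
      = (∑ k ∈ range (K'+1), 2*(2*(k:ℝ)+3) * mu k * aA i k * aA j (k+1))
        + (∑ k ∈ range (K'+1), 8*((k:ℝ)+1)^2 * mu k * aA i k * aA j k)
        + (∑ k ∈ range (K'+1), 2*(2*(k:ℝ)+3) * mu k * aA i (k+1) * aA j k) := by
    rw [Finset.sum_add_distrib, Finset.sum_add_distrib]
  rw [hsplit]
  linarith [hc1, hc2, hc3]

lemma aA_zero_if (k : ℕ) : aA 0 k = if k = 0 then 1 else 0 := by
  rw [aA_zero]
  cases k with
  | zero => rw [if_pos rfl]; exact Yt_zero_zero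
  | succ k => rw [if_neg (by omega)]; exact Yt_at_zero k

lemma Bsym (K i j : ℕ) (hi : i + 2 ≤ K) (hj : j + 2 ≤ K) :
    Bf K (i+1) j = Bf K i (j+1) := by
  rw [Bstep K i j hj, Ef_symm, ← Bstep K j i hi, Bf_symm]

lemma Bc : ∀ i j K, i + j + 2 ≤ K → Bf K i j = c (i+j) := by
  intro i
  induction i with
  | zero =>
    intro j K hK
    unfold Bf
    rw [Finset.sum_eq_single_of_mem 0 (Finset.mem_range.2 (by omega))
      (fun k _ hk => by
        rw [aA_zero_if, if_neg hk]
        ring)]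
    rw [aA_zero_if, if_pos rfl, mu_zero, c_eq_aA]
    ring
  | succ i ih =>
    intro j K hK
    rw [Bsym K i j (by omega) (by omega), ih (j+1) K (by omega)]
    congr 1
    omega


lemma lam_fac (k : ℕ) :
    ((Nat.factorial (2*k+1) * Nat.factorial (k+1) : ℝ))^2 * mu k
      = Nat.factorial (2*k+1) * Nat.factorial (2*k+2) := by
  unfold mu
  have h1 := fact_ne (k+1)
  have h2 : (Nat.factorial (2*k+2) : ℝ) = (2*(k:ℝ)+2) * Nat.factorial (2*k+1) := by
    have : 2*k+2 = (2*k+1)+1 := rfl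
    rw [this, Nat.factorial_succ]
    push_cast
    ring
  rw [h2]
  field_simp

lemma prod_icc (n : ℕ) :
    ∏ k ∈ range n, ((Nat.factorial (2*k+1) : ℝ) * Nat.factorial (2*k+2))
      = ∏ k ∈ Finset.Icc 1 (2*n), (Nat.factorial k : ℝ) := by
  induction n with
  | zero => simp
  | succ n ih =>
    rw [Finset.prod_range_succ, ih]
    have h1 : 2*(n+1) = (2*n+1)+1 := by ring
    rw [h1, Finset.prod_Icc_succ_top (by omega : 1 ≤ (2*n)+1+1),
      Finset.prod_Icc_succ_top (by omega : 1 ≤ (2*n)+1)]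
    ring_nf

theorem hankel_det (n : ℕ) :
    Matrix.det (fun i j : Fin n => eulerE (2 * ((i : ℕ) + (j : ℕ)) + 3))
      = ∏ k ∈ Finset.Icc 1 (2*n), (Nat.factorial (k) : ℝ) := by
  set L : Matrix (Fin n) (Fin n) ℝ := Matrix.of (fun i k : Fin n => aA i k) with hL
  set D : Matrix (Fin n) (Fin n) ℝ := Matrix.diagonal (fun k : Fin n => mu k) with hD
  have hH : (fun i j : Fin n => eulerE (2 * ((i : ℕ) + (j : ℕ)) + 3)) = L * D * L.transpose := by
    funext i j
    show eulerE (2 * ((i : ℕ) + (j : ℕ)) + 3) = ((L * D) * L.transpose) i j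
    rw [eulerE_eq_c]
    have hentry : ((L * D) * L.transpose) i j = ∑ k ∈ range n, aA i k * aA j k * mu k := by
      rw [Matrix.mul_apply, ← Fin.sum_univ_eq_sum_range]
      apply Finset.sum_congr rfl
      intro k _
      rw [Matrix.mul_diagonal]
      show aA i k * mu k * aA j k = _
      ring
    rw [hentry]
    have hK : ∑ k ∈ range n, aA i k * aA j k * mu k
        = Bf ((i:ℕ) + (j:ℕ) + 2 + n) i j := by
      unfold Bf
      apply Finset.sum_subset
      · apply Finset.range_subset_range.2; omega
      · intro k _ hk
        rw [aA_tri i k (by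
          have := i.isLt
          simp only [Finset.mem_range, not_lt] at hk
          omega)]
        ring
    rw [hK, Bc i j _ (by omega)]
  rw [hH, Matrix.det_mul, Matrix.det_mul, Matrix.det_transpose]
  have hdetL : L.det = ∏ k ∈ range n, ((Nat.factorial (2*k+1) : ℝ) * Nat.factorial (k+1)) := by
    rw [Matrix.det_of_lowerTriangular L (by
      intro i j hij
      show aA i j = 0
      exact aA_tri i j hij)]
    rw [← Fin.prod_univ_eq_prod_range]
    apply Finset.prod_congr rfl
    intro k _
    rw [show L k k = aA k k from rfl, aA_diag]
  have hdetD : D.det = ∏ k ∈ range n, mu k := by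
    rw [hD, Matrix.det_diagonal, ← Fin.prod_univ_eq_prod_range]
  rw [hdetL, hdetD, ← prod_icc]
  rw [← Finset.prod_mul_distrib, ← Finset.prod_mul_distrib]
  apply Finset.prod_congr rfl
  intro k _
  have := lam_fac k
  nlinarith [this]


end HankelAux

theorem hankel_tangent_shifted (n : ℕ) :
    Matrix.det (fun i j : Fin n => eulerE (2 * ((i : ℕ) + (j : ℕ)) + 3))
      = ∏ k ∈ Finset.Icc 1 (2*n), (Nat.factorial (k) : ℝ) :=
  HankelAux.hankel_det n
end

section
/- The Hankel determinants of the sequence (E_1, E_2, E_3, E_4, ...) are H_n = (n!/2^{n(n−1)/2}) · Π_{k=2}^{n−1} (k!)². -/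
open Finset

section HankelAux
open Polynomial

/-- b-coefficients of the J-fraction. -/
noncomputable def bco (k : ℕ) : ℝ := (k : ℝ) + 1
/-- λ-coefficients of the J-fraction. -/
noncomputable def lco (k : ℕ) : ℝ := (k : ℝ) * ((k : ℝ) + 1) / 2

/-- weighted Motzkin path counts -/
noncomputable def Tm : ℕ → ℕ → ℝ
  | 0, 0 => 1
  | 0, _+1 => 0
  | n+1, 0 => bco 0 * Tm n 0 + lco 1 * Tm n 1
  | n+1, k+1 => Tm n k + bco (k+1) * Tm n (k+1) + lco (k+2) * Tm n (k+2)

noncomputable def wgt : ℕ → ℝ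
  | 0 => 1
  | k+1 => wgt k * lco (k+1)

lemma Tm_eq_zero : ∀ n k, n < k → Tm n k = 0 := by
  intro n
  induction n with
  | zero => intro k hk; match k, hk with | (j+1), _ => rfl
  | succ n ih =>
    intro k hk
    match k, hk with
    | (k+1), hk =>
      have h1 : Tm n k = 0 := ih k (by omega)
      have h2 : Tm n (k+1) = 0 := ih (k+1) (by omega)
      have h3 : Tm n (k+2) = 0 := ih (k+2) (by omega)
      show Tm n k + bco (k+1) * Tm n (k+1) + lco (k+2) * Tm n (k+2) = 0
      rw [h1, h2, h3]; ring

lemma Tm_diag : ∀ n, Tm n n = 1 := by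
  intro n
  induction n with
  | zero => rfl
  | succ n ih =>
    show Tm n n + bco (n+1) * Tm n (n+1) + lco (n+2) * Tm n (n+2) = 1
    rw [ih, Tm_eq_zero n (n+1) (by omega), Tm_eq_zero n (n+2) (by omega)]; ring

lemma Tm_succ (n k : ℕ) :
    Tm (n+1) k = (if k = 0 then 0 else Tm n (k-1)) + bco k * Tm n k + lco (k+1) * Tm n (k+1) := by
  match k with
  | 0 => show bco 0 * Tm n 0 + lco 1 * Tm n 1 = _; simp
  | (k+1) => rfl

/-- `(1 + X²)/2`, the image of the derivative of tan+sec. -/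
noncomputable def gP : Polynomial ℝ := C (1/2 : ℝ) * (1 + X^2)

/-- derivative polynomials: `(tan+sec)⁽ⁿ⁾ = P n (tan+sec)` -/
noncomputable def Pder : ℕ → Polynomial ℝ
  | 0 => X
  | n+1 => (Pder n).derivative * gP

/-- basis polynomials `e_k = ((k+1)!/2^(k+1)) (1+X²)(X-1)^k` -/
noncomputable def EkP (k : ℕ) : Polynomial ℝ :=
  C (((k+1).factorial : ℝ) / 2^(k+1)) * ((1 + X^2) * (X - 1)^k)

lemma ck_succ (k : ℕ) :
    (((k+2).factorial : ℝ) / 2^(k+2)) = (((k+1).factorial : ℝ) / 2^(k+1)) * (((k:ℝ)+2)/2) := by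
  rw [Nat.factorial_succ]
  push_cast
  ring


lemma key0 : (EkP 0).derivative * gP = EkP 1 + C (bco 0) * EkP 0 + C (lco 0) * EkP 0 := by
  apply Polynomial.funext
  intro x
  simp [EkP, gP, bco, lco, Nat.factorial]
  ring

lemma keySucc (k : ℕ) : (EkP (k+1)).derivative * gP
    = EkP (k+2) + C (bco (k+1)) * EkP (k+1) + C (lco (k+1)) * EkP k := by
  have hd : ((1 + X^2) * (X - 1)^(k+1) : Polynomial ℝ).derivative
      = C 2 * X * (X-1)^(k+1) + C ((k:ℝ)+1) * (1 + X^2) * (X-1)^k := by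
    rw [derivative_mul, derivative_pow]
    simp only [derivative_add, derivative_one, derivative_X_pow, derivative_sub, derivative_X,
      derivative_one, sub_zero, Nat.add_sub_cancel]
    push_cast
    ring
  apply Polynomial.funext
  intro x
  simp only [EkP, derivative_mul, derivative_C, zero_mul, zero_add, hd, gP, bco, lco, ck_succ,
    eval_mul, eval_add, eval_C, eval_X, eval_pow, eval_sub, eval_one]
  push_cast
  ring

lemma keyEk (k : ℕ) : (EkP k).derivative * gP
    = EkP (k+1) + C (bco k) * EkP k + C (lco k) * EkP (k-1) := by
  match k with
  | 0 => exact key0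
  | (k+1) => exact keySucc k

lemma Pdecomp : ∀ n, Pder (n+1) = ∑ k ∈ Finset.range (n+2), C (Tm n k) * EkP k := by
  intro n; induction n with
  | zero =>
    show derivative X * gP = _
    rw [Finset.sum_range_succ, Finset.sum_range_one]
    have h0 : Tm 0 0 = 1 := rfl
    have h1 : Tm 0 1 = 0 := rfl
    rw [h0, h1]
    apply Polynomial.funext; intro x
    simp [gP, EkP, Nat.factorial]
  | succ n ih =>
    have lhs1 : Pder (n+2) = ∑ k ∈ Finset.range (n+2),
        C (Tm n k) * (EkP (k+1) + C (bco k) * EkP k + C (lco k) * EkP (k-1)) := by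
      show (Pder (n+1)).derivative * gP = _
      rw [ih, derivative_sum, Finset.sum_mul]
      refine Finset.sum_congr rfl (fun k _ => ?_)
      rw [derivative_mul, derivative_C, zero_mul, zero_add, mul_assoc, keyEk]
    rw [lhs1]
    have rhs1 : ∑ k ∈ Finset.range (n+3), C (Tm (n+1) k) * EkP k
        = (∑ k ∈ Finset.range (n+3), C (if k = 0 then 0 else Tm n (k-1)) * EkP k)
          + (∑ k ∈ Finset.range (n+3), C (bco k * Tm n k) * EkP k)
          + (∑ k ∈ Finset.range (n+3), C (lco (k+1) * Tm n (k+1)) * EkP k) := by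
      rw [← Finset.sum_add_distrib, ← Finset.sum_add_distrib]
      refine Finset.sum_congr rfl (fun k _ => ?_)
      rw [Tm_succ, C_add, C_add, add_mul, add_mul]
    rw [rhs1]
    simp only [mul_add]
    rw [Finset.sum_add_distrib, Finset.sum_add_distrib]
    congr 1
    · congr 1
      · -- first group
        rw [Finset.sum_range_succ' (fun k => C (if k = 0 then 0 else Tm n (k-1)) * EkP k) (n+2)]
        simp only [if_pos rfl, C_0, zero_mul, add_zero, if_neg (Nat.succ_ne_zero _),
          Nat.add_sub_cancel]
        simp
      · -- second group
        rw [Finset.sum_range_succ (fun k => C (bco k * Tm n k) * EkP k) (n+2)]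
        rw [Tm_eq_zero n (n+2) (by omega)]
        simp only [mul_zero, C_0, zero_mul, add_zero]
        refine Finset.sum_congr rfl (fun k _ => ?_)
        rw [C_mul]; ring
    · -- third group
      rw [Finset.sum_range_succ (fun k => C (lco (k+1) * Tm n (k+1)) * EkP k) (n+2),
          Finset.sum_range_succ (fun k => C (lco (k+1) * Tm n (k+1)) * EkP k) (n+1)]
      rw [Tm_eq_zero n (n+2) (by omega), Tm_eq_zero n (n+3) (by omega)]
      simp only [mul_zero, C_0, zero_mul, add_zero]
      rw [Finset.sum_range_succ' (fun k => C (Tm n k) * (C (lco k) * EkP (k-1))) (n+1)]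
      have hl0 : lco 0 = 0 := by simp [lco]
      rw [hl0]
      simp only [C_0, zero_mul, mul_zero, add_zero, Nat.add_sub_cancel]
      refine Finset.sum_congr rfl (fun k _ => ?_)
      rw [C_mul]; ring

lemma EkP_eval_one (k : ℕ) : (EkP k).eval 1 = if k = 0 then 1 else 0 := by
  match k with
  | 0 => simp [EkP, Nat.factorial]; norm_num
  | (k+1) => simp [EkP]

lemma Pder_eval_one (n : ℕ) : (Pder (n+1)).eval 1 = Tm n 0 := by
  rw [Pdecomp, eval_finset_sum]
  simp only [eval_mul, eval_C, EkP_eval_one, mul_ite, mul_one, mul_zero]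
  rw [Finset.sum_ite_eq' (Finset.range (n+2)) 0 (fun k => Tm n k)]
  simp

noncomputable def fts : ℝ → ℝ := fun x => Real.tan x + (Real.cos x)⁻¹

lemma fts_hasDerivAt {x : ℝ} (hx : x ∈ Set.Ioo (-(Real.pi/2)) (Real.pi/2)) :
    HasDerivAt fts ((1 + (fts x)^2)/2) x := by
  have hc : Real.cos x ≠ 0 := by
    have := Real.cos_pos_of_mem_Ioo hx
    linarith
  have h1 : HasDerivAt Real.tan (1 / Real.cos x ^ 2) x := Real.hasDerivAt_tan hc
  have h2 : HasDerivAt (fun y => (Real.cos y)⁻¹) (-(-Real.sin x) / (Real.cos x)^2) x :=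
    (Real.hasDerivAt_cos x).inv hc
  have h : HasDerivAt fts (1 / Real.cos x ^ 2 + -(-Real.sin x) / (Real.cos x)^2) x := h1.add h2
  convert h using 1
  simp only [fts, Real.tan_eq_sin_div_cos]
  have hsc := Real.sin_sq_add_cos_sq x
  field_simp
  ring_nf
  nlinarith [hsc]

lemma iteratedDeriv_fts (n : ℕ) : ∀ x ∈ Set.Ioo (-(Real.pi/2)) (Real.pi/2),
    iteratedDeriv n fts x = (Pder n).eval (fts x) := by
  induction n with
  | zero => intro x _; simp [Pder]
  | succ n ih =>
    intro x hx
    rw [iteratedDeriv_succ]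
    have heq : iteratedDeriv n fts =ᶠ[nhds x] fun y => (Pder n).eval (fts y) := by
      filter_upwards [isOpen_Ioo.mem_nhds hx] with y hy using ih y hy
    rw [heq.deriv_eq]
    have hD : HasDerivAt (fun y => (Pder n).eval (fts y))
        ((Pder n).derivative.eval (fts x) * ((1 + (fts x)^2)/2)) x :=
      (Polynomial.hasDerivAt (Pder n) (fts x)).comp x (fts_hasDerivAt hx)
    rw [hD.deriv]
    show _ = ((Pder n).derivative * gP).eval (fts x)
    rw [eval_mul]
    congr 1
    simp [gP]
    ring

lemma eulerE_eq (n : ℕ) : eulerE n = (Pder n).eval 1 := by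
  have h0 : (0:ℝ) ∈ Set.Ioo (-(Real.pi/2)) (Real.pi/2) := by
    constructor <;> [linarith [Real.pi_pos]; linarith [Real.pi_pos]]
  have := iteratedDeriv_fts n 0 h0
  have hf0 : fts 0 = 1 := by simp [fts]
  rw [hf0] at this
  exact this

lemma wgt_succ (k : ℕ) : wgt (k+1) = wgt k * lco (k+1) := rfl


lemma cross (m n N : ℕ) (hm : m < N) :
    ∑ k ∈ Finset.range (N+1), wgt k * ((if k = 0 then 0 else Tm m (k-1)) * Tm n k)
    = ∑ k ∈ Finset.range (N+1), wgt k * (Tm m k * (lco (k+1) * Tm n (k+1))) := by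
  rw [Finset.sum_range_succ' (fun k => wgt k * ((if k = 0 then 0 else Tm m (k-1)) * Tm n k)) N]
  rw [Finset.sum_range_succ (fun k => wgt k * (Tm m k * (lco (k+1) * Tm n (k+1)))) N]
  rw [Tm_eq_zero m N hm]
  simp only [if_pos rfl, if_true, mul_zero, zero_mul, add_zero, if_neg (Nat.succ_ne_zero _),
    Nat.add_sub_cancel]
  refine Finset.sum_congr rfl (fun k _ => ?_)
  rw [wgt_succ]
  ring

noncomputable def Sm (m n : ℕ) : ℝ := ∑ k ∈ Finset.range (m+n+1), wgt k * Tm m k * Tm n k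

lemma Sm_shift (m n : ℕ) : Sm (m+1) n = Sm m (n+1) := by
  unfold Sm
  have e1 : m+1+n+1 = (m+n+1)+1 := by omega
  have e2 : m+(n+1)+1 = (m+n+1)+1 := by omega
  rw [e1, e2]
  set N := m+n+1 with hN
  have ltm : m < N := by omega
  have ltn : n < N := by omega
  have L : ∑ k ∈ Finset.range (N+1), wgt k * Tm (m+1) k * Tm n k
      = (∑ k ∈ Finset.range (N+1), wgt k * ((if k = 0 then 0 else Tm m (k-1)) * Tm n k))
        + (∑ k ∈ Finset.range (N+1), wgt k * (bco k * (Tm m k * Tm n k)))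
        + (∑ k ∈ Finset.range (N+1), wgt k * (Tm n k * (lco (k+1) * Tm m (k+1)))) := by
    rw [← Finset.sum_add_distrib, ← Finset.sum_add_distrib]
    refine Finset.sum_congr rfl (fun k _ => ?_)
    rw [Tm_succ]; ring
  have R : ∑ k ∈ Finset.range (N+1), wgt k * Tm m k * Tm (n+1) k
      = (∑ k ∈ Finset.range (N+1), wgt k * ((if k = 0 then 0 else Tm n (k-1)) * Tm m k))
        + (∑ k ∈ Finset.range (N+1), wgt k * (bco k * (Tm m k * Tm n k)))
        + (∑ k ∈ Finset.range (N+1), wgt k * (Tm m k * (lco (k+1) * Tm n (k+1)))) := by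
    rw [← Finset.sum_add_distrib, ← Finset.sum_add_distrib]
    refine Finset.sum_congr rfl (fun k _ => ?_)
    rw [Tm_succ]; ring
  rw [L, R, cross m n N ltm, cross n m N ltn]
  ring

lemma Sm_eq (m : ℕ) : ∀ n, Sm m n = Tm (m+n) 0 := by
  induction m with
  | zero =>
    intro n
    unfold Sm
    rw [Finset.sum_eq_single 0]
    · simp [wgt, Tm]
    · intro k _ hk0
      match k, hk0 with
      | (k+1), _ => rw [Tm_eq_zero 0 (k+1) (by omega)]; ring
    · intro h; simp at h
  | succ m ih =>
    intro n
    rw [Sm_shift, ih (n+1)]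
    congr 1
    omega

lemma moment (i j : ℕ) : eulerE (i+j+1) = Sm i j := by
  rw [eulerE_eq, Pder_eval_one, Sm_eq]


lemma Sm_eq_sum {i n : ℕ} (j : ℕ) (hi : i < n) :
    Sm i j = ∑ k ∈ Finset.range n, wgt k * Tm i k * Tm j k := by
  unfold Sm
  have h1 := Finset.sum_subset (f := fun k => wgt k * Tm i k * Tm j k)
    (Finset.range_subset_range.2 (show i+j+1 ≤ n+i+j+1 by omega)) (fun k _ hk => by
      rw [Finset.mem_range, not_lt] at hk
      show wgt k * Tm i k * Tm j k = 0
      rw [Tm_eq_zero i k (by omega)]; ring)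
  have h2 := Finset.sum_subset (f := fun k => wgt k * Tm i k * Tm j k)
    (Finset.range_subset_range.2 (show n ≤ n+i+j+1 by omega)) (fun k _ hk => by
      rw [Finset.mem_range, not_lt] at hk
      show wgt k * Tm i k * Tm j k = 0
      rw [Tm_eq_zero i k (by omega)]; ring)
  exact h1.trans h2.symm

lemma wgt_closed (k : ℕ) : wgt k = (k.factorial : ℝ) * ((k+1).factorial : ℝ) / 2^k := by
  induction k with
  | zero => simp [wgt]
  | succ k ih =>
    have hk1 : ((k+1).factorial : ℝ) = ((k:ℝ)+1) * (k.factorial : ℝ) := by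
      rw [Nat.factorial_succ]; push_cast; ring
    have hk2 : ((k+1+1).factorial : ℝ) = ((k:ℝ)+2) * (((k:ℝ)+1) * (k.factorial : ℝ)) := by
      push_cast [Nat.factorial_succ]; ring
    rw [wgt_succ, ih, lco, hk1, hk2]
    have h2 : (2:ℝ)^k ≠ 0 := by positivity
    push_cast
    field_simp
    ring

lemma tri (n : ℕ) : (n+1)*n/2 = n*(n-1)/2 + n := by
  have h1 : (n+1).choose 2 = (n+1)*n/2 := by
    rw [Nat.choose_two_right]; simp
  have h2 : n.choose 2 = n*(n-1)/2 := Nat.choose_two_right n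
  rw [← h1, ← h2, Nat.choose_succ_succ, Nat.choose_one_right, Nat.add_comm]

lemma prod_wgt (n : ℕ) : ∏ k ∈ Finset.range n, wgt k
    = ((n.factorial : ℝ) / 2^(n*(n-1)/2)) * ∏ k ∈ Finset.Icc 2 (n-1), (k.factorial : ℝ)^2 := by
  induction n with
  | zero => simp
  | succ n ih =>
    rw [Finset.prod_range_succ, ih]
    match n with
    | 0 => norm_num [wgt]
    | 1 => norm_num [wgt_closed]
    | (m+2) =>
      have hsub : m+2-1 = m+1 := by omega
      have hsub2 : m+3-1 = m+2 := by omega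
      rw [hsub, hsub2]
      have hIcc : Finset.Icc 2 (m+2) = insert (m+2) (Finset.Icc 2 (m+1)) := by
        exact (Finset.insert_Icc_right_eq_Icc_add_one (a := 2) (b := m+1) (by omega)).symm
      rw [hIcc, Finset.prod_insert (by simp), wgt_closed]
      rw [show (m+3)*(m+2)/2 = (m+2)*(m+1)/2 + (m+2) from tri (m+2)]
      rw [show (m+2)*(m+1)/2 + (m+2) = (m+2)*(m+1)/2 + (m+2) from rfl]
      rw [pow_add]
      have h1 : (2:ℝ)^((m+2)*(m+1)/2) ≠ 0 := by positivity
      have h2 : (2:ℝ)^(m+2) ≠ 0 := by positivity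
      have hfac : ((m+2+1).factorial : ℝ) = ((m:ℝ)+3) * ((m+2).factorial : ℝ) := by
        rw [Nat.factorial_succ]; push_cast; ring
      rw [hfac]
      field_simp
      ring


end HankelAux

theorem hankel_euler_shifted (n : ℕ) :
    Matrix.det (fun i j : Fin n => eulerE ((i : ℕ) + (j : ℕ) + 1))
      = ((Nat.factorial n : ℝ) / 2^(n*(n-1)/2)) * ∏ k ∈ Finset.Icc 2 (n-1), (Nat.factorial (k) : ℝ)^2 := by
  classical
  set A : Matrix (Fin n) (Fin n) ℝ := Matrix.of (fun i k : Fin n => Tm i k * wgt k) with hA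
  set B : Matrix (Fin n) (Fin n) ℝ := Matrix.of (fun k j : Fin n => Tm j k) with hB
  have hM : (fun i j : Fin n => eulerE ((i : ℕ) + (j : ℕ) + 1)) = A * B := by
    funext i j
    calc eulerE ((i : ℕ) + (j : ℕ) + 1)
        = ∑ k ∈ Finset.range n, wgt k * Tm i k * Tm j k := by
          rw [moment, Sm_eq_sum (j : ℕ) i.isLt]
      _ = ∑ k : Fin n, wgt k * Tm i k * Tm j k :=
          (Fin.sum_univ_eq_sum_range (fun k => wgt k * Tm i k * Tm j k) n).symm
      _ = (A * B) i j := by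
          rw [Matrix.mul_apply]
          refine Finset.sum_congr rfl (fun k _ => ?_)
          simp only [hA, hB, Matrix.of_apply]
          ring
  rw [hM, Matrix.det_mul]
  have hAdet : A.det = ∏ i : Fin n, wgt i := by
    rw [Matrix.det_of_lowerTriangular A (fun i j h => by
      simp only [hA, Matrix.of_apply]
      rw [Tm_eq_zero i j (by exact_mod_cast h)]
      ring)]
    refine Finset.prod_congr rfl (fun i _ => ?_)
    simp only [hA, Matrix.of_apply, Tm_diag, one_mul]
  have hBdet : B.det = 1 := by
    rw [Matrix.det_of_upperTriangular (fun i j h => by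
      simp only [hB, Matrix.of_apply]
      exact Tm_eq_zero j i (by exact_mod_cast h))]
    simp [hB, Tm_diag]
  rw [hAdet, hBdet, mul_one]
  rw [Fin.prod_univ_eq_prod_range (fun k => wgt k) n]
  exact prod_wgt n
end

section
/- The Hankel determinants of the sequence (0, E_2, 0, E_4, 0, ...) satisfy H_{2n+1} = 0 and H_{2n} = (−1)^n Π_{k=1}^{n−1} ((2k+1)!)⁴. -/
open Finset

noncomputable def Hsec0 (n : ℕ) : ℝ :=
  Matrix.det (fun i j : Fin n =>
    if Odd ((i : ℕ) + (j : ℕ)) then eulerE ((i : ℕ) + (j : ℕ) + 1) else 0)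

namespace HZS

noncomputable def gk (k : ℕ) : ℝ → ℝ := fun x => (Real.cos x)⁻¹ * Real.tan x ^ k

noncomputable def GG (n k : ℕ) : ℝ := iteratedDeriv n (gk k) 0

def S : Set ℝ := {x | Real.cos x ≠ 0}

lemma isOpen_S : IsOpen S :=
  isOpen_compl_iff.mpr (isClosed_eq Real.continuous_cos continuous_const)

lemma zero_mem_S : (0 : ℝ) ∈ S := by simp [S]

lemma uniqueDiffOn_S : UniqueDiffOn ℝ S := isOpen_S.uniqueDiffOn

lemma contDiffOn_gk (k : ℕ) : ContDiffOn ℝ ⊤ (gk k) S := by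
  intro x hx
  have hc : Real.cos x ≠ 0 := hx
  exact (((Real.contDiff_cos.contDiffAt.inv hc).mul
    ((Real.contDiffAt_tan.2 hc).pow k)).contDiffWithinAt)

lemma contDiffOn_gk' (n : ℕ) (k : ℕ) : ContDiffOn ℝ n (gk k) S :=
  (contDiffOn_gk k).of_le le_top

lemma hasDerivAt_gk (k : ℕ) {x : ℝ} (hc : Real.cos x ≠ 0) :
    HasDerivAt (gk k) ((k : ℝ) * gk (k - 1) x + ((k : ℝ) + 1) * gk (k + 1) x) x := by
  have hcos : HasDerivAt Real.cos (-Real.sin x) x := Real.hasDerivAt_cos x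
  have hinv : HasDerivAt (fun y => (Real.cos y)⁻¹)
      (-(-Real.sin x) / Real.cos x ^ 2) x := hcos.inv hc
  have htan : HasDerivAt Real.tan (1 / Real.cos x ^ 2) x := Real.hasDerivAt_tan hc
  have hpow : HasDerivAt (fun y => Real.tan y ^ k)
      ((k : ℝ) * Real.tan x ^ (k - 1) * (1 / Real.cos x ^ 2)) x := htan.pow k
  have hmul := hinv.mul hpow
  have h1 : 1 / Real.cos x ^ 2 = 1 + Real.tan x ^ 2 := by
    rw [one_div, ← Real.inv_one_add_tan_sq hc, inv_inv]
  have hsin : Real.sin x = Real.tan x * Real.cos x := (Real.tan_mul_cos hc).symm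
  refine HasDerivAt.congr_deriv hmul ?_
  symm
  unfold gk
  cases k with
  | zero =>
    simp only [pow_zero, Nat.cast_zero, zero_mul, mul_one, zero_add, pow_one, neg_neg,
      Nat.cast_ofNat, CharP.cast_eq_zero, mul_zero, zero_mul, add_zero]
    rw [hsin]
    field_simp
  | succ m =>
    simp only [Nat.add_sub_cancel, Nat.cast_add, Nat.cast_one, neg_neg]
    rw [h1, hsin]
    field_simp
    ring

end HZS

namespace HZS

lemma iD_eq (n : ℕ) (f : ℝ → ℝ) {x : ℝ} (hx : x ∈ S) :
    iteratedDerivWithin n f S x = iteratedDeriv n f x := by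
  simp only [iteratedDerivWithin, iteratedDeriv,
    iteratedFDerivWithin_of_isOpen n isOpen_S hx]

lemma GG_succ (n k : ℕ) :
    GG (n+1) k = (k:ℝ) * GG n (k-1) + ((k:ℝ)+1) * GG n (k+1) := by
  have hev : deriv (gk k) =ᶠ[nhds (0:ℝ)]
      (fun x => (k:ℝ) * gk (k-1) x + ((k:ℝ)+1) * gk (k+1) x) := by
    filter_upwards [isOpen_S.mem_nhds zero_mem_S] with x hx
    exact (hasDerivAt_gk k hx).deriv
  have h1 : GG (n+1) k = iteratedDeriv n
      (fun x => (k:ℝ) * gk (k-1) x + ((k:ℝ)+1) * gk (k+1) x) 0 := by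
    rw [GG, iteratedDeriv_succ']
    exact Filter.EventuallyEq.iteratedDeriv_eq n hev
  have h2 : (fun x => (k:ℝ) * gk (k-1) x + ((k:ℝ)+1) * gk (k+1) x)
      = (fun x => (k:ℝ) * gk (k-1) x) + (fun x => ((k:ℝ)+1) * gk (k+1) x) := rfl
  rw [h1, ← iD_eq n _ zero_mem_S, h2,
    iteratedDerivWithin_add zero_mem_S uniqueDiffOn_S
      ((((contDiffOn_gk' n (k-1)).const_smul ((k:ℝ))).congr (fun x _ => by simp)) 0 zero_mem_S)
      ((((contDiffOn_gk' n (k+1)).const_smul ((k:ℝ)+1)).congr (fun x _ => by simp)) 0 zero_mem_S),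
    iteratedDerivWithin_const_mul zero_mem_S uniqueDiffOn_S _ (contDiffOn_gk' n (k-1) 0 zero_mem_S),
    iteratedDerivWithin_const_mul zero_mem_S uniqueDiffOn_S _ (contDiffOn_gk' n (k+1) 0 zero_mem_S),
    iD_eq n _ zero_mem_S, iD_eq n _ zero_mem_S]
  rfl

lemma GG_zero (k : ℕ) : GG 0 k = if k = 0 then 1 else 0 := by
  rw [GG, iteratedDeriv_zero, gk]
  simp [Real.tan_zero, Real.cos_zero, zero_pow_eq]

lemma GG_tri {n k : ℕ} (h : n < k) : GG n k = 0 := by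
  induction n generalizing k with
  | zero => rw [GG_zero, if_neg (by omega)]
  | succ m ih =>
    rw [GG_succ]
    rw [ih (by omega), ih (by omega), mul_zero, mul_zero, add_zero]

lemma GG_diag (n : ℕ) : GG n n = (Nat.factorial n : ℝ) := by
  induction n with
  | zero => rw [GG_zero]; simp
  | succ m ih =>
    rw [GG_succ, Nat.add_sub_cancel, GG_tri (show m < m + 1 + 1 by omega), mul_zero, add_zero, ih]
    push_cast [Nat.factorial_succ]
    ring

lemma GG_parity {n k : ℕ} (h : (n + k) % 2 = 1) : GG n k = 0 := by
  induction n generalizing k with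
  | zero => rw [GG_zero, if_neg (by omega)]
  | succ m ih =>
    rw [GG_succ]
    rcases Nat.eq_zero_or_pos k with hk | hk
    · subst hk
      have h1 : GG m 1 = 0 := ih (by omega)
      simp [h1]
    · have h1 : GG m (k-1) = 0 := ih (by omega)
      have h2 : GG m (k+1) = 0 := ih (by omega)
      rw [h1, h2, mul_zero, mul_zero, add_zero]

end HZS

namespace HZS

lemma shift_sum (A B : ℕ → ℝ) (R : ℕ) (hA : A (R+1) = 0) :
    ∑ k ∈ Finset.range (R+1), (k:ℝ) * A k * B (k-1)
      = ∑ k ∈ Finset.range (R+1), ((k:ℝ)+1) * A (k+1) * B k := by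
  rw [Finset.sum_range_succ' (fun k => (k:ℝ) * A k * B (k-1)) R,
    Finset.sum_range_succ (fun k => ((k:ℝ)+1) * A (k+1) * B k) R]
  simp only [Nat.cast_zero, zero_mul, add_zero, hA, mul_zero]
  refine Finset.sum_congr rfl (fun k _ => ?_)
  push_cast
  ring

noncomputable def V (i j : ℕ) : ℝ := ∑ k ∈ Finset.range (i+j+2), GG i k * GG j k

lemma V_shift (i j : ℕ) : V i (j+1) = V (i+1) j := by
  have hrange1 : i + (j+1) + 2 = (i+j+2)+1 := by omega
  have hrange2 : (i+1) + j + 2 = (i+j+2)+1 := by omega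
  rw [V, V, hrange1, hrange2]
  set R := i + j + 2 with hR
  have lhs : ∑ k ∈ Finset.range (R+1), GG i k * GG (j+1) k
      = ∑ k ∈ Finset.range (R+1), ((k:ℝ) * GG i k * GG j (k-1)
          + ((k:ℝ)+1) * GG i k * GG j (k+1)) := by
    refine Finset.sum_congr rfl (fun k _ => ?_)
    rw [GG_succ]
    ring
  have rhs : ∑ k ∈ Finset.range (R+1), GG (i+1) k * GG j k
      = ∑ k ∈ Finset.range (R+1), ((k:ℝ) * GG j k * GG i (k-1)
          + ((k:ℝ)+1) * GG j k * GG i (k+1)) := by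
    refine Finset.sum_congr rfl (fun k _ => ?_)
    rw [GG_succ]
    ring
  rw [lhs, rhs, Finset.sum_add_distrib, Finset.sum_add_distrib,
    shift_sum (GG i) (GG j) R (GG_tri (by omega)),
    shift_sum (GG j) (GG i) R (GG_tri (by omega))]
  have e1 : ∑ k ∈ Finset.range (R+1), ((k:ℝ)+1) * GG i (k+1) * GG j k
      = ∑ k ∈ Finset.range (R+1), ((k:ℝ)+1) * GG j k * GG i (k+1) := by
    refine Finset.sum_congr rfl (fun k _ => ?_); ring
  have e2 : ∑ k ∈ Finset.range (R+1), ((k:ℝ)+1) * GG j (k+1) * GG i k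
      = ∑ k ∈ Finset.range (R+1), ((k:ℝ)+1) * GG i k * GG j (k+1) := by
    refine Finset.sum_congr rfl (fun k _ => ?_); ring
  rw [e1, e2]
  ring

lemma V_base (i : ℕ) : V i 0 = GG i 0 := by
  rw [V]
  have : ∀ k ∈ Finset.range (i+0+2), GG i k * GG 0 k
      = if k = 0 then GG i 0 else 0 := by
    intro k _
    rw [GG_zero]
    by_cases hk : k = 0 <;> simp [hk]
  rw [Finset.sum_congr rfl this, Finset.sum_ite_eq' (Finset.range (i+0+2)) 0 (fun _ => GG i 0)]
  simp

lemma V_main (j : ℕ) : ∀ i, V i j = GG (i+j) 0 := by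
  induction j with
  | zero => intro i; rw [V_base, Nat.add_zero]
  | succ m ih =>
    intro i
    rw [V_shift, ih (i+1)]
    congr 1
    omega

lemma V_ext (i j R : ℕ) (hR : i + 1 ≤ R) :
    ∑ k ∈ Finset.range R, GG i k * GG j k = V i j := by
  rcases le_total R (i+j+2) with h | h
  · rw [V]
    refine Finset.sum_subset (Finset.range_subset_range.2 h) (fun k _ hk => ?_)
    rw [GG_tri (by simp at hk ⊢; omega), zero_mul]
  · rw [V]
    refine (Finset.sum_subset (Finset.range_subset_range.2 h) (fun k _ hk => ?_)).symm
    rw [GG_tri (by simp at hk ⊢; omega), zero_mul]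

end HZS

namespace HZS
open scoped Matrix

noncomputable def W' (k l : ℕ) : ℝ :=
  if k+1 = l then ((k:ℝ)+1) else if l+1 = k then ((l:ℝ)+1) else 0

lemma W'_split (k l : ℕ) :
    W' k l = (if l = k+1 then ((k:ℝ)+1) else 0) + (if l+1 = k then ((l:ℝ)+1) else 0) := by
  simp only [W']
  split_ifs <;> first | (exfalso; omega) | simp

lemma inner_nat (n k j : ℕ) (hk : k < n) (hj : j < n) :
    ∑ l ∈ Finset.range n, W' k l * GG j l = GG (j+1) k := by
  have hsum : ∀ l, W' k l * GG j l
      = (if l = k+1 then ((k:ℝ)+1) * GG j l else 0)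
        + (if l+1 = k then ((l:ℝ)+1) * GG j l else 0) := by
    intro l
    rw [W'_split, add_mul, ite_mul, ite_mul, zero_mul]
  rw [Finset.sum_congr rfl (fun l _ => hsum l), Finset.sum_add_distrib]
  have h1 : ∑ l ∈ Finset.range n, (if l = k+1 then ((k:ℝ)+1) * GG j l else 0)
      = ((k:ℝ)+1) * GG j (k+1) := by
    rw [Finset.sum_ite_eq' (Finset.range n) (k+1) (fun l => ((k:ℝ)+1) * GG j l)]
    by_cases h : k+1 ∈ Finset.range n
    · simp [h]
    · rw [if_neg h, GG_tri (by simp at h; omega), mul_zero]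
  have h2 : ∑ l ∈ Finset.range n, (if l+1 = k then ((l:ℝ)+1) * GG j l else 0)
      = (k:ℝ) * GG j (k-1) := by
    rcases k with _ | k'
    · simp
    · simp only [Nat.add_right_cancel_iff]
      rw [Finset.sum_ite_eq' (Finset.range n) k' (fun l => ((l:ℝ)+1) * GG j l)]
      rw [if_pos (Finset.mem_range.2 (by omega)), Nat.add_sub_cancel]
      push_cast
      ring
  rw [h1, h2, GG_succ]
  ring

noncomputable def Gm (n : ℕ) : Matrix (Fin n) (Fin n) ℝ := fun i k => GG (i:ℕ) (k:ℕ)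

noncomputable def Wm (n : ℕ) : Matrix (Fin n) (Fin n) ℝ := fun k l => W' (k:ℕ) (l:ℕ)

lemma entry_eq (n : ℕ) (i j : Fin n) :
    (Gm n * Wm n * (Gm n)ᵀ) i j = GG ((i:ℕ)+(j:ℕ)+1) 0 := by
  have h1 : (Gm n * Wm n * (Gm n)ᵀ) i j
      = ∑ k : Fin n, GG (i:ℕ) (k:ℕ) * ∑ l : Fin n, W' (k:ℕ) (l:ℕ) * GG (j:ℕ) (l:ℕ) := by
    simp only [Matrix.mul_apply, Matrix.transpose_apply, Gm, Wm, Finset.sum_mul,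
      Finset.mul_sum]
    rw [Finset.sum_comm]
    exact Finset.sum_congr rfl (fun k _ => Finset.sum_congr rfl (fun l _ => by ring))
  rw [h1]
  have h2 : ∀ k : Fin n, (∑ l : Fin n, W' (k:ℕ) (l:ℕ) * GG (j:ℕ) (l:ℕ))
      = GG ((j:ℕ)+1) (k:ℕ) := by
    intro k
    rw [Fin.sum_univ_eq_sum_range (fun l => W' (k:ℕ) l * GG (j:ℕ) l) n]
    exact inner_nat n k j k.isLt j.isLt
  rw [Finset.sum_congr rfl (fun k _ => by rw [h2 k])]
  rw [Fin.sum_univ_eq_sum_range (fun k => GG (i:ℕ) k * GG ((j:ℕ)+1) k) n]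
  rw [V_ext (i : ℕ) ((j : ℕ)+1) n (Nat.succ_le_of_lt i.isLt), V_main]
  congr 1

end HZS

namespace HZS

noncomputable def Wgen (n : ℕ) (c : ℕ → ℝ) : Matrix (Fin n) (Fin n) ℝ :=
  fun k l => if (k:ℕ)+1 = (l:ℕ) then c (k:ℕ) else if (l:ℕ)+1 = (k:ℕ) then c (l:ℕ) else 0

lemma val_succAbove_one {n : ℕ} (j : Fin (n+1)) :
    (((1 : Fin (n+2)).succAbove j) : ℕ) = if (j:ℕ) = 0 then 0 else (j:ℕ)+1 := by
  by_cases h : (j:ℕ) = 0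
  · rw [Fin.succAbove_of_castSucc_lt _ _ (by rw [Fin.lt_def]; simp [h])]
    simp [h]
  · rw [Fin.succAbove_of_le_castSucc _ _ (by rw [Fin.le_def]; simp; omega)]
    simp [h]

lemma det_Wgen_rec (n : ℕ) (c : ℕ → ℝ) :
    (Wgen (n+2) c).det = -((c 0)^2) * (Wgen n (fun k => c (k+2))).det := by
  rw [Matrix.det_succ_row_zero]
  rw [Finset.sum_eq_single (1 : Fin (n+2))]
  · have hA01 : Wgen (n+2) c 0 1 = c 0 := by
      simp [Wgen, Fin.val_one]
    rw [hA01, Fin.val_one]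
    have hsub : ((Wgen (n+2) c).submatrix Fin.succ (1 : Fin (n+2)).succAbove).det
        = c 0 * (Wgen n (fun k => c (k+2))).det := by
      rw [Matrix.det_succ_column_zero]
      rw [Finset.sum_eq_single (0 : Fin (n+1))]
      · have hentry : (Wgen (n+2) c).submatrix Fin.succ (1 : Fin (n+2)).succAbove 0 0
            = c 0 := by
          simp only [Matrix.submatrix_apply, Wgen]
          rw [if_neg, if_pos]
          · simp [val_succAbove_one]
          · rw [val_succAbove_one]; simp
          · rw [val_succAbove_one]; simp
        have hB : ((Wgen (n+2) c).submatrix Fin.succ (1 : Fin (n+2)).succAbove).submatrix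
            (0 : Fin (n+1)).succAbove Fin.succ = Wgen n (fun k => c (k+2)) := by
          ext i' j'
          simp only [Fin.succAbove_zero, Matrix.submatrix_apply, Wgen]
          have hv : (((1 : Fin (n+2)).succAbove (Fin.succ j')) : ℕ) = (j':ℕ)+2 := by
            rw [val_succAbove_one]
            simp [Fin.val_succ]
          rw [hv]
          simp only [Fin.val_succ]
          by_cases h1 : (i':ℕ)+1 = (j':ℕ)
          · rw [if_pos (by omega), if_pos h1]
          · rw [if_neg (by omega), if_neg h1]
            by_cases h2 : (j':ℕ)+1 = (i':ℕ)
            · rw [if_pos (by omega), if_pos h2]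
            · rw [if_neg (by omega), if_neg h2]
        rw [hentry, hB]
        simp
      · intro b _ hb
        have : (Wgen (n+2) c).submatrix Fin.succ (1 : Fin (n+2)).succAbove b 0 = 0 := by
          simp only [Matrix.submatrix_apply, Wgen]
          rw [if_neg, if_neg]
          · rw [val_succAbove_one]
            simp only [Fin.val_zero, if_pos rfl]
            intro h
            exact hb (Fin.ext (by simp [Fin.val_succ] at h ⊢; omega))
          · rw [val_succAbove_one]
            simp [Fin.val_succ]
        rw [this]
        ring
      · intro h
        exact absurd (Finset.mem_univ _) h
    rw [hsub]
    ring
  · intro b _ hb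
    have : Wgen (n+2) c 0 b = 0 := by
      simp only [Wgen]
      rw [if_neg, if_neg]
      · rw [Fin.val_zero]; omega
      · intro h
        exact hb (Fin.ext (by rw [Fin.val_zero] at h; rw [← h, Fin.val_one]))
    rw [this]
    ring
  · intro h
    exact absurd (Finset.mem_univ _) h

end HZS

namespace HZS

lemma det_Wgen_odd : ∀ (m : ℕ) (c : ℕ → ℝ), (Wgen (2*m+1) c).det = 0 := by
  intro m
  induction m with
  | zero =>
    intro c
    rw [show 2*0+1 = 1 from rfl, Matrix.det_fin_one]
    simp [Wgen]
  | succ p ih =>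
    intro c
    have h : 2*(p+1)+1 = (2*p+1)+2 := by ring
    rw [h, det_Wgen_rec, ih]
    ring

lemma det_Wgen_even : ∀ (m : ℕ) (c : ℕ → ℝ),
    (Wgen (2*m) c).det = ∏ j ∈ Finset.range m, (-(c (2*j))^2) := by
  intro m
  induction m with
  | zero => intro c; rw [show 2*0 = 0 from rfl, Matrix.det_fin_zero, Finset.range_zero,
      Finset.prod_empty]
  | succ p ih =>
    intro c
    have h : 2*(p+1) = (2*p)+2 := by ring
    rw [h, det_Wgen_rec, ih]
    rw [Finset.prod_range_succ' (fun j => (-(c (2*j))^2)) p]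
    have e : ∏ j ∈ Finset.range p, (-(c (2*(j+1)))^2)
        = ∏ j ∈ Finset.range p, (-(c (2*j+2))^2) :=
      Finset.prod_congr rfl (fun j _ => by rw [show 2*(j+1) = 2*j+2 from by ring])
    rw [e]
    ring

lemma det_Gm (n : ℕ) : (Gm n).det = ∏ i : Fin n, ((i:ℕ).factorial : ℝ) := by
  have h : (Gm n).BlockTriangular OrderDual.toDual := by
    intro i j hij
    exact GG_tri (by exact hij)
  rw [Matrix.det_of_lowerTriangular (Gm n) h]
  exact Finset.prod_congr rfl (fun i _ => GG_diag (i:ℕ))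

lemma tan_even_deriv {m : ℕ} (hm : m % 2 = 0) : iteratedDeriv m Real.tan 0 = 0 := by
  have h := iteratedDeriv_comp_neg m Real.tan 0
  have h2 : (fun x : ℝ => Real.tan (-x)) = (fun x : ℝ => -Real.tan x) := by
    funext x; exact Real.tan_neg x
  rw [h2, iteratedDeriv_fun_neg, neg_zero] at h
  have h3 : ((-1 : ℝ)^m) = 1 := Even.neg_one_pow (Nat.even_iff.2 hm)
  rw [h3, one_smul] at h
  linarith

lemma eulerE_even {m : ℕ} (hm : m % 2 = 0) : eulerE m = GG m 0 := by
  have hgk0 : gk 0 = (fun x => (Real.cos x)⁻¹) := by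
    funext x; simp [gk]
  have hsplit : (fun x : ℝ => Real.tan x + (Real.cos x)⁻¹)
      = Real.tan + (fun x : ℝ => (Real.cos x)⁻¹) := rfl
  have htan : ContDiffOn ℝ m Real.tan S := fun x hx =>
    ((Real.contDiffAt_tan.2 hx).of_le le_top).contDiffWithinAt
  have hsec : ContDiffOn ℝ m (fun x : ℝ => (Real.cos x)⁻¹) S := fun x hx =>
    ((Real.contDiff_cos.contDiffAt.inv hx).of_le le_top).contDiffWithinAt
  rw [eulerE, hsplit, ← iD_eq m _ zero_mem_S,
    iteratedDerivWithin_add zero_mem_S uniqueDiffOn_S (htan 0 zero_mem_S) (hsec 0 zero_mem_S),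
    iD_eq m _ zero_mem_S, iD_eq m _ zero_mem_S, tan_even_deriv hm, zero_add,
    GG, hgk0]

end HZS

namespace HZS
open scoped Matrix

lemma Wm_eq (n : ℕ) : Wm n = Wgen n (fun k => (k:ℝ)+1) := rfl

lemma matrix_eq (n : ℕ) :
    (fun i j : Fin n => if Odd ((i:ℕ)+(j:ℕ)) then eulerE ((i:ℕ)+(j:ℕ)+1) else 0)
      = Gm n * Wm n * (Gm n)ᵀ := by
  funext i j
  rw [entry_eq]
  by_cases h : Odd ((i:ℕ)+(j:ℕ))
  · rw [if_pos h]
    exact eulerE_even (by rw [Nat.odd_iff] at h; omega)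
  · rw [if_neg h]
    refine (GG_parity ?_).symm
    rw [Nat.odd_iff] at h
    omega

lemma Hsec0_eq (n : ℕ) :
    Hsec0 n = (∏ i ∈ Finset.range n, ((Nat.factorial i : ℝ)))^2
      * (Wgen n (fun k => (k:ℝ)+1)).det := by
  rw [Hsec0, matrix_eq n, Matrix.det_mul, Matrix.det_mul, Matrix.det_transpose,
    ← Wm_eq, det_Gm, Fin.prod_univ_eq_prod_range (fun i => ((Nat.factorial i : ℝ))) n]
  ring

lemma keyQ : ∀ m : ℕ,
    (∏ i ∈ Finset.range (2*m), ((Nat.factorial i : ℝ)))^2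
      * ∏ j ∈ Finset.range m, (((2*j : ℕ) : ℝ)+1)^2
    = ∏ k ∈ Finset.Icc 1 (m-1), ((Nat.factorial (2*k+1) : ℝ))^4 := by
  intro m
  induction m with
  | zero => simp
  | succ p ih =>
    rw [show 2*(p+1) = (2*p+1)+1 from by ring, Finset.prod_range_succ,
      show 2*p+1 = (2*p)+1 from rfl, Finset.prod_range_succ, Finset.prod_range_succ]
    have hf : ((Nat.factorial (2*p+1) : ℝ)) = (((2*p : ℕ) : ℝ)+1) * (Nat.factorial (2*p) : ℝ) := by
      rw [show 2*p+1 = (2*p)+1 from rfl, Nat.factorial_succ]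
      push_cast
      ring
    rcases Nat.eq_zero_or_pos p with hp | hp
    · subst hp
      norm_num [Nat.factorial]
    · have htop : Finset.Icc 1 (p+1-1) = Finset.Icc 1 ((p-1)+1) := by
        congr 1
        omega
      rw [htop, Finset.prod_Icc_succ_top (by omega)]
      rw [← ih, show (p-1)+1 = p from by omega, show 2*p+1 = (2*p)+1 from rfl]
      rw [show (2*p)+1 = 2*p+1 from rfl, hf]
      ring

end HZS

theorem hankel_zero_secant (n : ℕ) :
    Hsec0 (2*n+1) = 0 ∧
    Hsec0 (2*n) = (-1 : ℝ)^n * ∏ k ∈ Finset.Icc 1 (n-1), (Nat.factorial (2*k+1) : ℝ)^4 := by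
  constructor
  · rw [HZS.Hsec0_eq, HZS.det_Wgen_odd n (fun k => (k:ℝ)+1), mul_zero]
  · rw [HZS.Hsec0_eq, HZS.det_Wgen_even n (fun k => (k:ℝ)+1)]
    have h1 : ∏ j ∈ Finset.range n, (-(((2*j : ℕ) : ℝ)+1)^2)
        = (-1:ℝ)^n * ∏ j ∈ Finset.range n, (((2*j : ℕ) : ℝ)+1)^2 := by
      rw [show (fun j => -(((2*j : ℕ) : ℝ)+1)^2)
          = fun j => (-1:ℝ) * ((((2*j : ℕ) : ℝ)+1)^2) from funext fun j => by ring,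
        Finset.prod_mul_distrib, Finset.prod_const, Finset.card_range]
    rw [h1, ← HZS.keyQ n]
    ring
end

section
/- Define α_n = Σ_{k=0}^{n} C(n−k, k) · k!. Then α_0 = α_1 = 1, α_2 = 2, and for n ≥ 3, 2α_n = 3α_{n−1} + (n−1)α_{n−2} − (n−1)α_{n−3}. -/
open Finset

/-- `α n = Σ_{k=0}^{n} C(n-k, k) · k!`. -/
def alphaSeq (n : ℕ) : ℕ :=
  ∑ k ∈ Finset.range (n+1), (n-k).choose k * Nat.factorial k

/-- Auxiliary sequence `β n = Σ k · C(n-k,k) · k!`. -/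
def betaSeq (n : ℕ) : ℕ :=
  ∑ k ∈ Finset.range (n+1), k * ((n-k).choose k * Nat.factorial k)

lemma choose_sub_eq_zero {n k : ℕ} (h : n + 1 ≤ k) : (n - k).choose k = 0 := by
  have h1 : n - k = 0 := by omega
  rw [h1]
  exact Nat.choose_eq_zero_of_lt (by omega)

lemma alpha_ext (n N : ℕ) (h : n + 1 ≤ N) :
    alphaSeq n = ∑ k ∈ Finset.range N, (n-k).choose k * Nat.factorial k := by
  unfold alphaSeq
  refine Finset.sum_subset (Finset.range_subset_range.2 h) ?_
  intro k _ hk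
  rw [Finset.mem_range, not_lt] at hk
  rw [choose_sub_eq_zero hk, zero_mul]

lemma beta_ext (n N : ℕ) (h : n + 1 ≤ N) :
    betaSeq n = ∑ k ∈ Finset.range N, k * ((n-k).choose k * Nat.factorial k) := by
  unfold betaSeq
  refine Finset.sum_subset (Finset.range_subset_range.2 h) ?_
  intro k _ hk
  rw [Finset.mem_range, not_lt] at hk
  rw [choose_sub_eq_zero hk, zero_mul, mul_zero]

lemma pascal_aux (n i : ℕ) :
    (n + 1 - i).choose (i+1) = (n - i).choose i + (n - i).choose (i+1) := by
  rcases le_or_gt i n with h | h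
  · have h1 : n + 1 - i = (n - i) + 1 := by omega
    rw [h1, Nat.choose_succ_succ]
  · have h1 : n + 1 - i = 0 := by omega
    have h2 : n - i = 0 := by omega
    rw [h1, h2, Nat.choose_eq_zero_of_lt (by omega : 0 < i + 1),
      Nat.choose_eq_zero_of_lt (by omega : 0 < i)]

lemma part2 (n : ℕ) :
    ∑ i ∈ Finset.range (n+2), (n-i).choose i * Nat.factorial (i+1)
      = alphaSeq n + betaSeq n := by
  have : ∀ i ∈ Finset.range (n+2),
      (n-i).choose i * Nat.factorial (i+1)
        = (n-i).choose i * Nat.factorial i + i * ((n-i).choose i * Nat.factorial i) := by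
    intro i _
    rw [Nat.factorial_succ]
    ring
  rw [Finset.sum_congr rfl this, Finset.sum_add_distrib,
    ← alpha_ext n (n+2) (by omega), ← beta_ext n (n+2) (by omega)]

lemma lemA (n : ℕ) : alphaSeq (n+2) = alphaSeq (n+1) + alphaSeq n + betaSeq n := by
  have key : alphaSeq (n+2) =
      (∑ i ∈ Finset.range (n+2), (n+1-i).choose (i+1) * Nat.factorial (i+1)) + 1 := by
    rw [alpha_ext (n+2) (n+3) (by omega), Finset.sum_range_succ']
    congr 1
    apply Finset.sum_congr rfl
    intro i _
    congr 2
    omega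
  have key2 : ∑ i ∈ Finset.range (n+2), (n+1-i).choose (i+1) * Nat.factorial (i+1)
      = (∑ i ∈ Finset.range (n+2), (n-i).choose (i+1) * Nat.factorial (i+1))
        + (∑ i ∈ Finset.range (n+2), (n-i).choose i * Nat.factorial (i+1)) := by
    rw [← Finset.sum_add_distrib]
    apply Finset.sum_congr rfl
    intro i _
    rw [pascal_aux, add_mul]
    ring
  have key3 : alphaSeq (n+1)
      = (∑ i ∈ Finset.range (n+2), (n-i).choose (i+1) * Nat.factorial (i+1)) + 1 := by
    rw [alpha_ext (n+1) (n+3) (by omega), Finset.sum_range_succ']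
    congr 1
    apply Finset.sum_congr rfl
    intro i _
    congr 2
    omega
  rw [key, key2, part2, key3]
  ring

lemma pascal_aux2 (t k : ℕ) :
    k * (t+2-k).choose k = k * (t+1-k).choose k + k * (t+1-k).choose (k-1) := by
  match k with
  | 0 => simp
  | (k'+1) =>
    rcases le_or_gt k' t with h | h
    · have h1 : t+2-(k'+1) = (t-k') + 1 := by omega
      have h2 : t+1-(k'+1) = t-k' := by omega
      have h3 : k'+1-1 = k' := by omega
      rw [h1, h2, h3, Nat.choose_succ_succ]
      ring
    · have h1 : t+2-(k'+1) = 0 := by omega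
      have h2 : t+1-(k'+1) = 0 := by omega
      have h3 : k'+1-1 = k' := by omega
      rw [h1, h2, h3, Nat.choose_eq_zero_of_lt (by omega : 0 < k' + 1),
        Nat.choose_eq_zero_of_lt (by omega : 0 < k')]
      simp

lemma absorb (t i : ℕ) :
    (i+1) * (t+1-i).choose (i+1) = (t+1-i) * (t-i).choose i := by
  rcases le_or_gt i t with h | h
  · have h1 : t+1-i = (t-i)+1 := by omega
    rw [h1]
    calc (i+1) * ((t-i)+1).choose (i+1)
        = ((t-i)+1).choose (i+1) * (i+1) := by ring
      _ = Nat.succ (t-i) * (t-i).choose i := (Nat.add_one_mul_choose_eq _ _).symm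
      _ = ((t-i)+1) * (t-i).choose i := rfl
  · have h1 : t+1-i = 0 := by omega
    rw [h1]
    simp

lemma lemB (t : ℕ) :
    2 * betaSeq (t+2) + (t+2) * alphaSeq (t+1)
      = betaSeq (t+1) + (t+2) * alphaSeq (t+2) := by
  -- T route : Pascal
  have hT : betaSeq (t+2) = betaSeq (t+1)
      + ∑ i ∈ Finset.range (t+2), (i+1) * ((t-i).choose i * Nat.factorial (i+1)) := by
    have e1 : betaSeq (t+2)
        = ∑ k ∈ Finset.range (t+3), (k * ((t+1-k).choose k * Nat.factorial k)
            + k * ((t+1-k).choose (k-1) * Nat.factorial k)) := by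
      rw [beta_ext (t+2) (t+3) (by omega)]
      apply Finset.sum_congr rfl
      intro k _
      calc k * ((t+2-k).choose k * Nat.factorial k)
          = (k * (t+2-k).choose k) * Nat.factorial k := by ring
        _ = (k * (t+1-k).choose k + k * (t+1-k).choose (k-1)) * Nat.factorial k := by
            rw [pascal_aux2]
        _ = _ := by ring
    rw [e1, Finset.sum_add_distrib]
    congr 1
    · exact (beta_ext (t+1) (t+3) (by omega)).symm
    · rw [Finset.sum_range_succ']
      simp only [Nat.zero_sub, Nat.choose_zero_right, zero_mul, add_zero,
        Nat.add_sub_cancel]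
      apply Finset.sum_congr rfl
      intro i _
      congr 3
      omega
  -- V route : absorption
  have hV : betaSeq (t+2)
      = ∑ i ∈ Finset.range (t+2), (t+1-i) * ((t-i).choose i * Nat.factorial (i+1)) := by
    rw [beta_ext (t+2) (t+3) (by omega), Finset.sum_range_succ']
    simp only [zero_mul, add_zero]
    apply Finset.sum_congr rfl
    intro i _
    have h1 : t+2-(i+1) = t+1-i := by omega
    rw [h1]
    calc (i+1) * ((t+1-i).choose (i+1) * Nat.factorial (i+1))
        = ((i+1) * (t+1-i).choose (i+1)) * Nat.factorial (i+1) := by ring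
      _ = ((t+1-i) * (t-i).choose i) * Nat.factorial (i+1) := by rw [absorb]
      _ = _ := by ring
  have hTV : (∑ i ∈ Finset.range (t+2), (i+1) * ((t-i).choose i * Nat.factorial (i+1)))
      + (∑ i ∈ Finset.range (t+2), (t+1-i) * ((t-i).choose i * Nat.factorial (i+1)))
      = (t+2) * (alphaSeq t + betaSeq t) := by
    rw [← Finset.sum_add_distrib, ← part2 t, Finset.mul_sum]
    apply Finset.sum_congr rfl
    intro i hi
    rw [Finset.mem_range] at hi
    have h1 : (i+1) + (t+1-i) = t+2 := by omega
    rw [← add_mul, h1]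
  have h2 : 2 * betaSeq (t+2) = betaSeq (t+1) + (t+2) * (alphaSeq t + betaSeq t) := by
    rw [two_mul]
    nth_rewrite 1 [hT]
    rw [hV]
    rw [add_assoc, hTV]
  rw [h2, lemA t]
  ring

theorem alpha_recurrence :
    alphaSeq 0 = 1 ∧ alphaSeq 1 = 1 ∧ alphaSeq 2 = 2 ∧
    ∀ n : ℕ, 3 ≤ n →
      2 * (alphaSeq n : ℤ) =
        3 * alphaSeq (n-1) + (n-1) * alphaSeq (n-2) - (n-1) * alphaSeq (n-3) := by
  have a0 : alphaSeq 0 = 1 := by norm_num [alphaSeq, Finset.sum_range_succ]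
  have a1 : alphaSeq 1 = 1 := by norm_num [alphaSeq, Finset.sum_range_succ]
  have a2 : alphaSeq 2 = 2 := by norm_num [alphaSeq, Finset.sum_range_succ]
  have a3 : alphaSeq 3 = 3 := by norm_num [alphaSeq, Finset.sum_range_succ]
  refine ⟨a0, a1, a2, ?_⟩
  intro n hn
  obtain ⟨j, rfl⟩ : ∃ j, n = j + 3 := ⟨n - 3, by omega⟩
  have e1 : j + 3 - 1 = j + 2 := by omega
  have e2 : j + 3 - 2 = j + 1 := by omega
  have e3 : j + 3 - 3 = j := by omega
  rw [e1, e2, e3]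
  match j with
  | 0 =>
    rw [a0, a1, a2, a3]
    norm_num
  | (t+1) =>
    have hA2 : (alphaSeq (t+4) : ℤ) = alphaSeq (t+3) + alphaSeq (t+2) + betaSeq (t+2) := by
      exact_mod_cast congrArg (Nat.cast : ℕ → ℤ) (lemA (t+2))
    have hA1 : (alphaSeq (t+3) : ℤ) = alphaSeq (t+2) + alphaSeq (t+1) + betaSeq (t+1) := by
      exact_mod_cast congrArg (Nat.cast : ℕ → ℤ) (lemA (t+1))
    have hB : 2 * (betaSeq (t+2) : ℤ) + (t+2) * alphaSeq (t+1)
        = betaSeq (t+1) + (t+2) * alphaSeq (t+2) := by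
      exact_mod_cast congrArg (Nat.cast : ℕ → ℤ) (lemB t)
    have e4 : t + 1 + 3 = t + 4 := by omega
    have e5 : t + 1 + 2 = t + 3 := by omega
    have e6 : t + 1 + 1 = t + 2 := by omega
    rw [e4, e5, e6]
    push_cast
    linear_combination 2 * hA2 + hB - hA1
end

section
/- Let α_n = Σ_{k=0}^{n} C(n−k,k) · k! and let c_m = α_m. Then the Hankel determinants satisfy det(c_{i+j})_{i,j=0}^{2n−1} = Π_{k=1}^{n} ((k−1)!)³ · k! and det(c_{i+j})_{i,j=0}^{2n} = Π_{k=1}^{n} (k−1)! · (k!)³. -/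
open Finset

namespace HankelAux

def lm (k : ℕ) : ℤ := ((k+1)/2 : ℕ)

def bb (k : ℕ) : ℤ := if k % 2 = 0 then 1 else 0

def dd (k : ℕ) : ℤ := ∏ i ∈ range k, lm (i+1)

def LL : ℕ → ℕ → ℤ
  | 0, k => if k = 0 then 1 else 0
  | (m+1), k => (if k = 0 then 0 else LL m (k-1)) + bb k * LL m k + lm (k+1) * LL m (k+1)

def WW (n m : ℕ) : ℤ :=
  ∑ j ∈ range (n+1), ((n-j).choose j : ℤ) * (Nat.factorial (m+j) : ℤ)

def EE (t j : ℕ) : ℤ := (-1)^(t-j) * (t.choose j : ℤ)^2 * (Nat.factorial (t-j) : ℤ)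

def OO (t j : ℕ) : ℤ := (-1)^(t-j) * (t.choose j : ℤ) * ((t+1).choose (j+1) : ℤ)
    * (Nat.factorial (t-j) : ℤ)

def GG (m k : ℕ) : ℤ :=
  if k % 2 = 0 then ∑ j ∈ range (k/2+1), EE (k/2) j * WW m j
  else ∑ j ∈ range (k/2+1), OO (k/2) j * (WW (m+1) j - WW m j)

lemma WW_zero (m : ℕ) : WW 0 m = (Nat.factorial m : ℤ) := by
  simp [WW]

lemma WW_one (m : ℕ) : WW 1 m = (Nat.factorial m : ℤ) := by
  simp [WW, Finset.sum_range_succ]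

lemma WW_rec (n m : ℕ) : WW (n+2) m = WW (n+1) m + WW n (m+1) := by
  have h1 : WW (n+2) m = ∑ j ∈ range (n+2), ((n+2-j).choose j : ℤ) * (Nat.factorial (m+j)) := by
    rw [WW, Finset.sum_range_succ]
    have : (n+2-(n+2)).choose (n+2) = 0 := by
      simp [Nat.choose_eq_zero_of_lt]
    simp [this]
  rw [h1, WW, WW]
  rw [Finset.sum_range_succ' (fun j => ((n+2-j).choose j : ℤ) * (Nat.factorial (m+j))),
      Finset.sum_range_succ' (fun j => ((n+1-j).choose j : ℤ) * (Nat.factorial (m+j)))]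
  have key : ∀ j ∈ range (n+1),
      ((n+2-(j+1)).choose (j+1) : ℤ) * (Nat.factorial (m+(j+1)))
      = ((n+1-(j+1)).choose (j+1) : ℤ) * (Nat.factorial (m+(j+1)))
        + ((n-j).choose j : ℤ) * (Nat.factorial (m+1+j)) := by
    intro j hj
    rw [Finset.mem_range] at hj
    have hle : j ≤ n := Nat.lt_succ_iff.mp hj
    have e1 : n+2-(j+1) = (n-j)+1 := by omega
    have e2 : n+1-(j+1) = n-j := by omega
    have e3 : m+(j+1) = m+1+j := by omega
    rw [e1, e2, e3, Nat.choose_succ_succ' (n-j) j]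
    push_cast
    ring
  rw [Finset.sum_congr rfl key]
  rw [Finset.sum_add_distrib]
  simp [Nat.choose_zero_right]
  ring

end HankelAux

namespace HankelAux

lemma key1 (s j : ℕ) : ((s+1).choose j) * (s+1-j) = (s+1) * (s.choose j) := by
  rw [← Nat.choose_succ_right_eq, Nat.add_one_mul_choose_eq]

lemma EE_of_lt {t j : ℕ} (h : t < j) : EE t j = 0 := by
  simp [EE, Nat.choose_eq_zero_of_lt h]

lemma OO_of_lt {t j : ℕ} (h : t < j) : OO t j = 0 := by
  simp [OO, Nat.choose_eq_zero_of_lt h]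

lemma EE_self (t : ℕ) : EE t t = 1 := by
  simp [EE]

lemma OO_self (t : ℕ) : OO t t = 1 := by
  simp [OO]

lemma EO1 (t j : ℕ) : EE t j = OO t j + (t : ℤ) * OO (t-1) j := by
  rcases t with _ | s
  · rcases j with _ | j
    · simp [EE, OO]
    · simp [EE_of_lt (Nat.succ_pos j), OO_of_lt (Nat.succ_pos j)]
  · simp only [Nat.add_sub_cancel]
    rcases lt_trichotomy j (s+1) with hj | hj | hj
    · obtain ⟨r, rfl⟩ : ∃ r, s = j + r := ⟨s - j, by omega⟩
      have hk : (((j+r+1).choose j : ℤ)) * ((r : ℕ) + 1) = (j+r+1) * ((j+r).choose j) := by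
        have := key1 (j+r) j
        rw [show j+r+1-j = r+1 by omega] at this
        exact_mod_cast this
      simp only [EE, OO]
      rw [show j+r+1-j = r+1 by omega, show j+r-j = r by omega,
        Nat.choose_succ_succ (j+r+1) j, pow_succ, Nat.factorial_succ]
      push_cast
      linear_combination ((-1:ℤ)^r) * (((j+r+1).choose (j+1)) : ℤ)
        * ((r.factorial : ℤ)) * hk
    · subst hj
      rw [EE_self, OO_self, OO_of_lt (by omega : s < s+1)]
      ring
    · rw [EE_of_lt hj, OO_of_lt hj, OO_of_lt (by omega : s < j)]
      ring

lemma EO2 (t i : ℕ) : OO t i = EE (t+1) (i+1) + ((t:ℤ)+1) * EE t (i+1) := by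
  rcases lt_trichotomy i t with hi | hi | hi
  · obtain ⟨r, rfl⟩ : ∃ r, t = i + 1 + r := ⟨t - i - 1, by omega⟩
    have hk : ((((i+1+r).choose i : ℤ)) + ((i+1+r).choose (i+1))) * ((r : ℕ) + 1)
        = (i+1+r+1) * ((i+1+r).choose (i+1)) := by
      have := key1 (i+1+r) (i+1)
      rw [show i+1+r+1-(i+1) = r+1 by omega, Nat.choose_succ_succ (i+1+r) i] at this
      exact_mod_cast this
    simp only [EE, OO]
    rw [show i+1+r-i = r+1 by omega, show i+1+r+1-(i+1) = r+1 by omega,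
      show i+1+r-(i+1) = r by omega,
      Nat.choose_succ_succ (i+1+r) i, pow_succ, Nat.factorial_succ]
    push_cast
    simp only [Nat.succ_eq_add_one]
    linear_combination ((-1:ℤ)^r) * (((i+1+r).choose (i+1)) : ℤ)
      * ((r.factorial : ℤ)) * hk
  · subst hi
    rw [OO_self, EE_self, EE_of_lt (by omega : i < i+1)]
    ring
  · rw [OO_of_lt hi, EE_of_lt (by omega : t+1 < i+1), EE_of_lt (by omega : t < i+1)]
    ring

lemma EO2_zero (t : ℕ) : EE (t+1) 0 + ((t:ℤ)+1) * EE t 0 = 0 := by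
  simp only [EE, Nat.choose_zero_right, Nat.sub_zero]
  push_cast
  rw [pow_succ, Nat.factorial_succ]
  push_cast
  ring

end HankelAux

namespace HankelAux

lemma alt_sum (t : ℕ) : ∑ j ∈ range (t+1), (-1:ℤ)^(t-j) * (t.choose j)
    = if t = 0 then 1 else 0 := by
  have hr := Finset.sum_range_reflect (fun j => (-1:ℤ)^(t-j) * (t.choose j)) (t+1)
  rw [← hr, ← Int.alternating_sum_range_choose]
  refine Finset.sum_congr rfl fun j hj => ?_
  rw [Finset.mem_range, Nat.lt_succ_iff] at hj
  rw [show t+1-1-j = t-j from rfl, show t-(t-j) = j by omega, Nat.choose_symm hj]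

lemma GG_even (m t : ℕ) : GG m (2*t) = ∑ j ∈ range (t+1), EE t j * WW m j := by
  rw [GG, if_pos (by omega : (2*t) % 2 = 0), show (2*t)/2 = t by omega]

lemma GG_odd (m t : ℕ) : GG m (2*t+1)
    = ∑ j ∈ range (t+1), OO t j * (WW (m+1) j - WW m j) := by
  rw [GG, if_neg (by omega : ¬ (2*t+1) % 2 = 0), show (2*t+1)/2 = t by omega]

lemma GG_zero_left (k : ℕ) : GG 0 k = if k = 0 then 1 else 0 := by
  obtain ⟨t, rfl | rfl⟩ := Nat.even_or_odd' k
  · rw [GG_even]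
    have step : ∀ j ∈ range (t+1), EE t j * WW 0 j
        = (-1:ℤ)^(t-j) * (t.choose j) * (t.factorial) := by
      intro j hj
      rw [Finset.mem_range, Nat.lt_succ_iff] at hj
      rw [WW_zero, EE]
      have h2 : ((t.choose j : ℤ)) * (j.factorial) * ((t-j).factorial)
          = (t.factorial : ℤ) := by
        exact_mod_cast Nat.choose_mul_factorial_mul_factorial hj
      linear_combination ((-1:ℤ)^(t-j)) * (t.choose j : ℤ) * h2
    rw [Finset.sum_congr rfl step, ← Finset.sum_mul, alt_sum]
    split_ifs with h1 h2 h3 <;> simp_all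
  · rw [GG_odd]
    simp [WW_one, WW_zero]

lemma GG_col_zero (m : ℕ) : GG m 0 = (alphaSeq m : ℤ) := by
  have h0 : GG m 0 = ∑ j ∈ range 1, EE 0 j * WW m j := GG_even m 0
  rw [h0]
  simp only [Finset.sum_range_one, EE, WW, alphaSeq]
  push_cast
  simp

lemma bb_even (t : ℕ) : bb (2*t) = 1 := by simp [bb, Nat.mul_mod_right]
lemma bb_odd (t : ℕ) : bb (2*t+1) = 0 := by
  rw [bb, if_neg (by omega : ¬ (2*t+1) % 2 = 0)]
lemma lm_even (t : ℕ) : lm (2*t) = (t : ℤ) := by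
  rw [lm, show (2*t+1)/2 = t by omega]
lemma lm_odd (t : ℕ) : lm (2*t+1) = (t : ℤ) + 1 := by
  rw [lm, show (2*t+1+1)/2 = t+1 by omega]
  push_cast; ring

lemma Grec (m k : ℕ) :
    GG (m+1) k = GG m (k+1) + bb k * GG m k + lm k * GG m (k-1) := by
  obtain ⟨t, rfl | rfl⟩ := Nat.even_or_odd' k
  · -- even k = 2t
    rcases t with _ | s
    · -- k = 0
      have h1 : ∀ m' : ℕ, GG m' 0 = WW m' 0 := by
        intro m'
        rw [show (0:ℕ) = 2*0 from rfl, GG_even]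
        simp [EE]
      simp only [Nat.mul_zero, Nat.zero_sub]
      rw [show (0:ℕ)+1 = 2*0+1 from rfl, GG_odd, h1, h1]
      have h2 : ∑ j ∈ range (0+1), OO 0 j * (WW (m+1) j - WW m j)
          = WW (m+1) 0 - WW m 0 := by
        simp [OO_self]
      rw [h2, show bb 0 = 1 from rfl, show lm 0 = 0 by simp [lm]]
      ring
    · have hk1 : 2*(s+1)+1 = 2*(s+1)+1 := rfl
      have hkm : 2*(s+1)-1 = 2*s+1 := by omega
      rw [hkm, GG_even, GG_odd, GG_even, GG_odd, bb_even, lm_even]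
      have hext : ∑ j ∈ range (s+1), OO s j * (WW (m+1) j - WW m j)
          = ∑ j ∈ range (s+2), OO s j * (WW (m+1) j - WW m j) := by
        rw [Finset.sum_range_succ _ (s+1), OO_of_lt (by omega : s < s+1)]
        ring
      rw [hext]
      have step : ∀ j ∈ range (s+2), EE (s+1) j * WW (m+1) j
          = OO (s+1) j * (WW (m+1) j - WW m j) + EE (s+1) j * WW m j
            + ((s:ℤ)+1) * (OO s j * (WW (m+1) j - WW m j)) := by
        intro j _
        have h := EO1 (s+1) j
        rw [Nat.add_sub_cancel] at h
        push_cast at h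
        linear_combination (WW (m+1) j) * h - (WW m j) * h
      rw [Finset.sum_congr rfl step]
      rw [Finset.sum_add_distrib, Finset.sum_add_distrib, ← Finset.mul_sum]
      push_cast
      ring
  · -- odd k = 2t+1
    have hkp : 2*t+1+1 = 2*(t+1) := by omega
    have hkm : 2*t+1-1 = 2*t := by omega
    rw [hkm, hkp, GG_odd, GG_even, GG_even, bb_odd, lm_odd]
    have lhs1 : ∑ j ∈ range (t+1), OO t j * (WW (m+1+1) j - WW (m+1) j)
        = ∑ j ∈ range (t+1), OO t j * WW m (j+1) := by
      refine Finset.sum_congr rfl fun j _ => ?_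
      rw [show m+1+1 = m+2 from rfl, WW_rec]
      ring
    rw [lhs1]
    have hext : ((t:ℤ)+1) * ∑ j ∈ range (t+1), EE t j * WW m j
        = ∑ j ∈ range (t+2), ((t:ℤ)+1) * (EE t j * WW m j) := by
      rw [Finset.sum_range_succ _ (t+1), EE_of_lt (by omega : t < t+1)]
      rw [Finset.mul_sum]
      ring
    rw [hext, zero_mul, add_zero, show t+1+1 = t+2 from rfl, ← Finset.sum_add_distrib]
    rw [Finset.sum_range_succ' (fun j => EE (t+1) j * WW m j + ((t:ℤ)+1) * (EE t j * WW m j)) (t+1)]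
    have hz : EE (t+1) 0 * WW m 0 + ((t:ℤ)+1) * (EE t 0 * WW m 0) = 0 := by
      have := EO2_zero t
      linear_combination (WW m 0) * this
    rw [hz, add_zero]
    refine Finset.sum_congr rfl fun i _ => ?_
    have h := EO2 t i
    linear_combination (WW m (i+1)) * h

end HankelAux

namespace HankelAux

lemma LL_zero_eq (k : ℕ) : LL 0 k = if k = 0 then 1 else 0 := rfl

lemma LL_succ (m k : ℕ) : LL (m+1) k
    = (if k = 0 then 0 else LL m (k-1)) + bb k * LL m k + lm (k+1) * LL m (k+1) := rfl

lemma LL_of_lt : ∀ {m k : ℕ}, m < k → LL m k = 0 := by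
  intro m
  induction m with
  | zero => intro k hk; rw [LL_zero_eq, if_neg (by omega)]
  | succ m ih =>
    intro k hk
    rw [LL_succ, if_neg (by omega), ih (by omega : m < k), ih (by omega : m < k+1),
      ih (by omega : m < k-1)]
    ring

lemma LL_diag (m : ℕ) : LL m m = 1 := by
  induction m with
  | zero => rfl
  | succ m ih =>
    rw [LL_succ, if_neg (by omega), Nat.add_sub_cancel, ih,
      LL_of_lt (by omega : m < m+1), LL_of_lt (by omega : m < m+1+1)]
    ring

lemma dd_zero : dd 0 = 1 := rfl

lemma dd_succ (k : ℕ) : dd (k+1) = dd k * lm (k+1) := Finset.prod_range_succ _ _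

lemma GdL : ∀ m k : ℕ, GG m k = dd k * LL m k := by
  intro m
  induction m with
  | zero =>
    intro k
    rw [GG_zero_left, LL_zero_eq]
    rcases k with _ | k
    · simp [dd]
    · simp
  | succ m ih =>
    intro k
    rw [Grec, LL_succ]
    rcases k with _ | s
    · rw [show (0:ℕ)-1 = 0 from rfl, show lm 0 = 0 by simp [lm], ih 1, ih 0]
      rw [if_pos rfl, dd_succ 0, dd_zero, show (0:ℕ)+1 = 1 from rfl]
      ring
    · rw [show s+1-1 = s from rfl, ih (s+1+1), ih (s+1), ih s, if_neg (by omega)]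
      rw [show lm (s+1) * (dd s * LL m s) = dd (s+1) * LL m s by rw [dd_succ]; ring]
      rw [show dd (s+1+1) * LL m (s+1+1) = dd (s+1) * (lm (s+2) * LL m (s+2)) by
        rw [dd_succ (s+1)]; ring]
      ring

lemma Rrel : ∀ j i : ℕ, ∑ k ∈ range (j+1), LL j k * GG i k = (alphaSeq (i+j) : ℤ) := by
  intro j
  induction j with
  | zero =>
    intro i
    simp [LL_zero_eq, GG_col_zero]
  | succ j ih =>
    intro i
    have expand : ∀ k ∈ range (j+2), LL (j+1) k * GG i k
        = (if k = 0 then 0 else LL j (k-1)) * GG i k + bb k * LL j k * GG i k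
          + lm (k+1) * LL j (k+1) * GG i k := by
      intro k _
      rw [LL_succ]
      ring
    rw [show j+1+1 = j+2 from rfl, Finset.sum_congr rfl expand,
      Finset.sum_add_distrib, Finset.sum_add_distrib]
    have hS1 : ∑ k ∈ range (j+2), (if k = 0 then 0 else LL j (k-1)) * GG i k
        = ∑ k ∈ range (j+1), LL j k * GG i (k+1) := by
      rw [Finset.sum_range_succ' (fun k => (if k = 0 then 0 else LL j (k-1)) * GG i k) (j+1)]
      simp
    have hS2 : ∑ k ∈ range (j+2), bb k * LL j k * GG i k
        = ∑ k ∈ range (j+1), bb k * LL j k * GG i k := by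
      rw [Finset.sum_range_succ _ (j+1), LL_of_lt (by omega : j < j+1)]
      ring
    have hS3 : ∑ k ∈ range (j+2), lm (k+1) * LL j (k+1) * GG i k
        = ∑ k ∈ range (j+1), lm k * LL j k * GG i (k-1) := by
      rw [Finset.sum_range_succ _ (j+1), LL_of_lt (by omega : j < j+1+1),
        Finset.sum_range_succ _ j, LL_of_lt (by omega : j < j+1)]
      rw [Finset.sum_range_succ' (fun k => lm k * LL j k * GG i (k-1)) j]
      simp [show lm 0 = 0 by simp [lm]]
    rw [hS1, hS2, hS3, ← Finset.sum_add_distrib, ← Finset.sum_add_distrib]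
    have step2 : ∀ k ∈ range (j+1),
        LL j k * GG i (k+1) + bb k * LL j k * GG i k + lm k * LL j k * GG i (k-1)
        = LL j k * GG (i+1) k := by
      intro k _
      rw [Grec i k]
      ring
    rw [Finset.sum_congr rfl step2, ih (i+1), show i+1+j = i+(j+1) by omega]

lemma hankel_entry (N i j : ℕ) (hi : i < N) (hj : j < N) :
    ∑ k ∈ range N, LL i k * (dd k * LL j k) = (alphaSeq (i+j) : ℤ) := by
  have h1 : ∑ k ∈ range N, LL i k * (dd k * LL j k)
      = ∑ k ∈ range N, LL j k * GG i k := by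
    refine Finset.sum_congr rfl fun k _ => ?_
    rw [GdL i k]
    ring
  rw [h1]
  have h2 : ∀ r : ℕ, ∑ k ∈ range (j+1+r), LL j k * GG i k
      = ∑ k ∈ range (j+1), LL j k * GG i k := by
    intro r
    induction r with
    | zero => rfl
    | succ r ihr =>
      rw [show j+1+(r+1) = (j+1+r)+1 from by omega, Finset.sum_range_succ,
        LL_of_lt (by omega : j < j+1+r), ihr]
      ring
  rcases Nat.exists_eq_add_of_le (by omega : j+1 ≤ N) with ⟨r, rfl⟩
  rw [h2 r, Rrel j i]

end HankelAux

namespace HankelAux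

lemma factorization (N : ℕ) :
    (fun i j : Fin N => (alphaSeq ((i : ℕ) + (j : ℕ)) : ℤ))
      = (Matrix.of fun i k : Fin N => LL i k)
        * Matrix.diagonal (fun k : Fin N => dd k)
        * Matrix.transpose (Matrix.of fun i k : Fin N => LL i k) := by
  ext i j
  rw [Matrix.mul_apply]
  simp only [Matrix.mul_diagonal, Matrix.transpose_apply, Matrix.of_apply]
  rw [Fin.sum_univ_eq_sum_range (fun k => LL i k * dd k * LL j k) N]
  rw [← hankel_entry N i j i.isLt j.isLt]
  exact Finset.sum_congr rfl fun k _ => by ring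

lemma det_hankel (N : ℕ) :
    Matrix.det (fun i j : Fin N => (alphaSeq ((i : ℕ) + (j : ℕ)) : ℤ))
      = ∏ k ∈ range N, dd k := by
  rw [factorization N, Matrix.det_mul, Matrix.det_mul, Matrix.det_transpose]
  have htri : Matrix.det (Matrix.of fun i k : Fin N => LL i k) = 1 := by
    have hb : (Matrix.of fun i k : Fin N => (LL i k : ℤ)).BlockTriangular OrderDual.toDual := by
      intro i j hij
      exact LL_of_lt (show (i:ℕ) < (j:ℕ) from hij)
    rw [Matrix.det_of_lowerTriangular _ hb]
    simp [LL_diag]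
  rw [htri, Matrix.det_diagonal, Fin.prod_univ_eq_prod_range]
  ring

lemma dd_eval (j : ℕ) : dd (2*j) = ((j.factorial : ℤ))^2
    ∧ dd (2*j+1) = (j.factorial : ℤ) * (((j+1).factorial : ℤ)) := by
  induction j with
  | zero =>
    constructor
    · rfl
    · rw [show 2*0+1 = 0+1 from rfl, dd_succ, dd_zero, show lm 1 = 1 by norm_num [lm]]
      simp
  | succ j ih =>
    obtain ⟨ih1, ih2⟩ := ih
    have h1 : dd (2*(j+1)) = ((j+1).factorial : ℤ)^2 := by
      rw [show 2*(j+1) = (2*j+1)+1 by omega, dd_succ, ih2,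
        show (2*j+1)+1 = 2*(j+1) by omega, lm_even, Nat.factorial_succ]
      push_cast
      ring
    refine ⟨h1, ?_⟩
    rw [show 2*(j+1)+1 = (2*(j+1))+1 from rfl, dd_succ, h1,
      lm_odd, Nat.factorial_succ (j+1)]
    push_cast
    ring

lemma prod_even (n : ℕ) : ∏ k ∈ range (2*n), dd k
    = ∏ k ∈ Finset.Icc 1 n, ((Nat.factorial (k-1) : ℤ))^3 * (Nat.factorial k : ℤ) := by
  induction n with
  | zero => simp
  | succ n ih =>
    rw [show 2*(n+1) = (2*n+1)+1 by omega, Finset.prod_range_succ, Finset.prod_range_succ,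
      ih, (dd_eval n).1, (dd_eval n).2, Finset.prod_Icc_succ_top (by omega : 1 ≤ n+1),
      Nat.add_sub_cancel]
    push_cast
    ring

lemma prod_odd (n : ℕ) : ∏ k ∈ range (2*n+1), dd k
    = ∏ k ∈ Finset.Icc 1 n, (Nat.factorial (k-1) : ℤ) * (Nat.factorial k : ℤ)^3 := by
  induction n with
  | zero => simp [dd_zero]
  | succ n ih =>
    rw [show 2*(n+1)+1 = ((2*n+1)+1)+1 by omega, Finset.prod_range_succ, Finset.prod_range_succ,
      ih, show (2*n+1)+1 = 2*(n+1) by omega, (dd_eval (n+1)).1, (dd_eval n).2,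
      Finset.prod_Icc_succ_top (by omega : 1 ≤ n+1), Nat.add_sub_cancel]
    push_cast
    ring

end HankelAux

theorem hankel_alpha (n : ℕ) :
    Matrix.det (fun i j : Fin (2*n) => (alphaSeq ((i : ℕ) + (j : ℕ)) : ℤ))
      = ∏ k ∈ Finset.Icc 1 n, (Nat.factorial (k-1) : ℤ)^3 * (Nat.factorial k : ℤ) ∧
    Matrix.det (fun i j : Fin (2*n+1) => (alphaSeq ((i : ℕ) + (j : ℕ)) : ℤ))
      = ∏ k ∈ Finset.Icc 1 n, (Nat.factorial (k-1) : ℤ) * (Nat.factorial k : ℤ)^3 := by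
  exact ⟨by rw [HankelAux.det_hankel, HankelAux.prod_even],
    by rw [HankelAux.det_hankel, HankelAux.prod_odd]⟩
end
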